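/- arXiv:1604.01529 — 5 statements merged into one kernel-verified Lean document; each statement's English description precedes it below -/
import Mathlib

section
/- A k-decision rule f on voting situations is a decision scoring rule if and only if f is neutral, consistent, and continuous. -/
open Finset

abbrev Vote (A : Type*) [Fintype A] := A ≃ Fin (Fintype.card A)

structure DecisionRule (A : Type*) [Fintype A] [DecidableEq A] (k : ℕ) (R : Type*) where
  F : (Vote A → R) → {C : Finset A // C.card = k} → {C : Finset A // C.card = k} → ℤ
  antisymm : ∀ P C1 C2, F P C1 C2 = - F P C2 C1
  mem_range : ∀ P C1 C2, F P C1 C2 = -1 ∨ F P C1 C2 = 0 ∨ F P C1 C2 = 1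

abbrev Committee (A : Type*) (k : ℕ) := {C : Finset A // C.card = k}

section Defs

variable {A : Type*} [Fintype A] [DecidableEq A] {k : ℕ}

/-- The set of positions occupied by the members of `C` in vote `π`. -/
def Vote.pos (π : Vote A) (C : Finset A) : Finset (Fin (Fintype.card A)) := C.image π

/-- The action of a candidate permutation on a vote. -/
def permVote (σ : Equiv.Perm A) (π : Vote A) : Vote A := σ.symm.trans π

/-- The action of a candidate permutation on a voting situation. -/
def permSitu {R : Type*} (σ : Equiv.Perm A) (P : Vote A → R) : Vote A → R :=
  fun π => P (σ.trans π)

/-- The action of a candidate permutation on a committee. -/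
def permComm (σ : Equiv.Perm A) (C : Committee A k) : Committee A k :=
  ⟨C.1.image σ, by rw [Finset.card_image_of_injective _ σ.injective]; exact C.2⟩

/-- Committee position `I` (weakly) dominates committee position `J`:
listing both increasingly, each element of `I` is at most the corresponding element of `J`. -/
def Dominates {m : ℕ} (I J : Finset (Fin m)) : Prop :=
  List.Forall₂ (· ≤ ·) (I.sort (· ≤ ·)) (J.sort (· ≤ ·))

namespace DecisionRule

variable {R : Type*} [AddCommMonoid R]

def Neutral (f : DecisionRule A k R) : Prop :=
  ∀ (σ : Equiv.Perm A) (P : Vote A → R) (C1 C2 : Committee A k),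
    f.F (permSitu σ P) (permComm σ C1) (permComm σ C2) = f.F P C1 C2

def Consistent (f : DecisionRule A k R) : Prop :=
  ∀ (P Q : Vote A → R) (C1 C2 : Committee A k),
    (f.F P C1 C2 = 1 → 0 ≤ f.F Q C1 C2 → f.F (P + Q) C1 C2 = 1) ∧
    (0 ≤ f.F P C1 C2 → 0 ≤ f.F Q C1 C2 → 0 ≤ f.F (P + Q) C1 C2)

def IsContinuous (f : DecisionRule A k R) : Prop :=
  ∀ (P1 P2 : Vote A → R) (C1 C2 : Committee A k),
    f.F P2 C1 C2 = 1 → ∃ n : ℕ, f.F (P1 + n • P2) C1 C2 = 1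

def Transitive (f : DecisionRule A k R) : Prop :=
  ∀ (P : Vote A → R) (C1 C2 C3 : Committee A k),
    0 ≤ f.F P C1 C2 → 0 ≤ f.F P C2 C3 → 0 ≤ f.F P C1 C3

end DecisionRule

def DecisionRule.CommitteeDominance {A : Type*} [Fintype A] [DecidableEq A] {k : ℕ}
    {R : Type*} [CommSemiring R] [PartialOrder R] [IsOrderedRing R] (f : DecisionRule A k R) : Prop :=
  ∀ (P : Vote A → R) (C1 C2 : Committee A k), (∀ π, 0 ≤ P π) →
    (∀ π, 0 < P π → Dominates (π.pos C1.1) (π.pos C2.1)) → 0 ≤ f.F P C1 C2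

/-- The `λ`-score of a committee `C` in an integer voting situation `P`. -/
noncomputable def scoreN (lam : Finset (Fin (Fintype.card A)) → ℝ) (C : Finset A)
    (P : Vote A → ℕ) : ℝ :=
  ∑ π : Vote A, (P π : ℝ) * lam (π.pos C)

end Defs

/-- The `d`-score of an ordered pair of committees in an integer voting situation. -/
noncomputable def pairScoreN {A : Type*} [Fintype A] [DecidableEq A]
    (d : Finset (Fin (Fintype.card A)) → Finset (Fin (Fintype.card A)) → ℝ)
    (C1 C2 : Finset A) (P : Vote A → ℕ) : ℝ :=
  ∑ π : Vote A, (P π : ℝ) * d (π.pos C1) (π.pos C2)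

/-- `f` is a decision scoring rule: there is a decision scoring function `d`
(antisymmetric on committee positions) such that weak social preference corresponds to a
nonnegative total pair score and social indifference corresponds to a zero total pair score. -/
noncomputable def DecisionRule.IsDecisionScoringRule {A : Type*} [Fintype A] [DecidableEq A]
    {k : ℕ} (f : DecisionRule A k ℕ) : Prop :=
  ∃ d : Finset (Fin (Fintype.card A)) → Finset (Fin (Fintype.card A)) → ℝ,
    (∀ I J : Finset (Fin (Fintype.card A)), I.card = k → J.card = k → d I J = - d J I) ∧
    ∀ (P : Vote A → ℕ) (C1 C2 : Committee A k),
      (0 ≤ f.F P C1 C2 ↔ 0 ≤ pairScoreN d C1.1 C2.1 P) ∧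
      (f.F P C1 C2 = 0 ↔ pairScoreN d C1.1 C2.1 P = 0)


section Aux
set_option maxHeartbeats 1000000


section Holder
variable {M : Type*} [AddCommGroup M]

structure SignFn (s : M → ℤ) : Prop where
  range : ∀ x, s x = -1 ∨ s x = 0 ∨ s x = 1
  zero : s 0 = 0
  odd : ∀ x, s (-x) = - s x
  nn : ∀ x y, 0 ≤ s x → 0 ≤ s y → 0 ≤ s (x + y)
  pos : ∀ x y, s x = 1 → 0 ≤ s y → s (x + y) = 1
  arch : ∀ x y, s y = 1 → ∃ n : ℕ, s (x + n • y) = 1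

namespace SignFn

variable {s : M → ℤ}

lemma np (hs : SignFn s) (x y : M) (hx : s x ≤ 0) (hy : s y ≤ 0) : s (x + y) ≤ 0 := by
  have h1 : 0 ≤ s (-x) := by rw [hs.odd]; omega
  have h2 : 0 ≤ s (-y) := by rw [hs.odd]; omega
  have := hs.nn _ _ h1 h2
  rw [← neg_add, hs.odd] at this; omega

lemma negstrict (hs : SignFn s) (x y : M) (hx : s x = -1) (hy : s y ≤ 0) : s (x + y) = -1 := by
  have h1 : s (-x) = 1 := by rw [hs.odd]; omega
  have h2 : 0 ≤ s (-y) := by rw [hs.odd]; omega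
  have := hs.pos _ _ h1 h2
  rw [← neg_add, hs.odd] at this; omega

lemma addzero (hs : SignFn s) (x y : M) (hy : s y = 0) : s (x + y) = s x := by
  rcases hs.range x with h | h | h
  · rw [h]; exact hs.negstrict x y h (by omega)
  · rw [h]
    have h1 := hs.nn x y (by omega) (by omega)
    have h2 := hs.np x y (by omega) (by omega)
    omega
  · rw [h]; exact hs.pos x y h (by omega)

lemma nsmul_sign (hs : SignFn s) (n : ℕ) (hn : n ≠ 0) (x : M) : s (n • x) = s x := by
  induction n with
  | zero => omega
  | succ m ih =>
    rcases Nat.eq_zero_or_pos m with hm | hm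
    · subst hm; simp
    · rw [succ_nsmul]
      have ihm := ih (by omega)
      rcases hs.range x with h | h | h
      · rw [h]; exact hs.negstrict _ _ (by omega) (by omega)
      · rw [h]; rw [hs.addzero _ _ h, ihm, h]
      · rw [h]; exact hs.pos _ _ (by omega) (by omega)

lemma zsmul_sign (hs : SignFn s) (a : ℤ) (ha : 0 < a) (x : M) : s (a • x) = s x := by
  have : a • x = a.toNat • x := by
    rw [← natCast_zsmul]; congr 1; omega
  rw [this]; exact hs.nsmul_sign _ (by omega) x

end SignFn
end Holder

section Holder2
variable {M : Type*} [AddCommGroup M] {s : M → ℤ}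

/-- The set of rationals `p/q` with `p • e ≤ q • x` in the order induced by `s`. -/
def hset (s : M → ℤ) (e : M) (x : M) : Set ℚ := {q : ℚ | 0 ≤ s ((q.den : ℤ) • x - q.num • e)}

lemma rat_rep (r : ℚ) (p q : ℤ) (hq : 0 < q) (hr : r = (p : ℚ) / q) :
    p * (r.den : ℤ) = r.num * q := by
  have hq0 : (q : ℚ) ≠ 0 := Int.cast_ne_zero.2 (by omega)
  have hden : ((r.den : ℚ)) ≠ 0 := Nat.cast_ne_zero.2 r.den_nz
  have h1 : (r.num : ℚ) = r * r.den := by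
    rw [eq_comm, ← eq_div_iff hden]
    exact (Rat.num_div_den r).symm
  have : (p : ℚ) * (r.den : ℚ) = (r.num : ℚ) * q := by
    rw [h1, hr]; field_simp
  exact_mod_cast this

lemma mem_hset_div (hs : SignFn s) (e x : M) (p q : ℤ) (hq : 0 < q) :
    ((p : ℚ) / (q : ℚ) ∈ hset s e x) ↔ 0 ≤ s (q • x - p • e) := by
  set r : ℚ := (p : ℚ) / q with hr
  have key : p * (r.den : ℤ) = r.num * q := rat_rep r p q hq rfl
  have hden : (0:ℤ) < (r.den : ℤ) := by exact_mod_cast r.pos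
  have e1 : (r.den : ℤ) • (q • x - p • e) = q • ((r.den : ℤ) • x - r.num • e) := by
    rw [smul_sub, smul_sub, smul_smul, smul_smul, smul_smul, smul_smul,
      mul_comm ((r.den : ℤ)) q]
    congr 2
    rw [mul_comm q r.num, ← key, mul_comm]
  have c : s ((r.den : ℤ) • x - r.num • e) = s (q • x - p • e) := by
    rw [← hs.zsmul_sign q hq ((r.den : ℤ) • x - r.num • e), ← e1, hs.zsmul_sign _ hden]
  constructor
  · intro h
    have h' : 0 ≤ s ((r.den : ℤ) • x - r.num • e) := h
    rwa [c] at h'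
  · intro h
    show 0 ≤ s ((r.den : ℤ) • x - r.num • e)
    rwa [c]

lemma smul_e_nonneg (hs : SignFn s) {e : M} (he : s e = 1) (m : ℤ) (hm : 0 ≤ m) :
    0 ≤ s (m • e) := by
  rcases eq_or_lt_of_le hm with h | h
  · rw [← h, zero_smul, hs.zero]
  · rw [hs.zsmul_sign m h, he]; omega

lemma smul_e_pos (hs : SignFn s) {e : M} (he : s e = 1) (m : ℤ) (hm : 0 < m) :
    s (m • e) = 1 := by rw [hs.zsmul_sign m hm, he]

/-- monotone / downward-closure, integer form -/
lemma hmono (hs : SignFn s) {e : M} (he : s e = 1) (x : M) (p q p' q' : ℤ)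
    (hq : 0 < q) (hq' : 0 < q') (hpq : p' * q ≤ p * q')
    (h : 0 ≤ s (q • x - p • e)) : 0 ≤ s (q' • x - p' • e) := by
  have h1 : 0 ≤ s (q' • (q • x - p • e)) := by rwa [hs.zsmul_sign q' hq']
  have h2 : 0 ≤ s ((p * q' - p' * q) • e) := smul_e_nonneg hs he _ (by omega)
  have h3 := hs.nn _ _ h1 h2
  have e1 : q' • (q • x - p • e) + (p * q' - p' * q) • e = q • (q' • x - p' • e) := by
    rw [smul_sub, smul_sub, smul_smul, smul_smul, smul_smul, smul_smul, sub_smul]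
    rw [mul_comm q' q, mul_comm q' p, mul_comm q p']
    abel
  rw [e1, hs.zsmul_sign q hq] at h3
  exact h3

lemma hset_down (hs : SignFn s) {e : M} (he : s e = 1) (x : M) (a b : ℚ)
    (hab : a ≤ b) (hb : b ∈ hset s e x) : a ∈ hset s e x := by
  have hcross : a.num * (b.den : ℤ) ≤ b.num * (a.den : ℤ) := by
    have ha' : (0:ℚ) < (a.den : ℚ) := by exact_mod_cast a.pos
    have hb' : (0:ℚ) < (b.den : ℚ) := by exact_mod_cast b.pos
    have : (a.num : ℚ) / a.den ≤ (b.num : ℚ) / b.den := by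
      rw [Rat.num_div_den, Rat.num_div_den]; exact hab
    rw [div_le_div_iff₀ ha' hb'] at this
    exact_mod_cast this
  exact hmono hs he x b.num (b.den : ℤ) a.num (a.den : ℤ)
    (by exact_mod_cast b.pos) (by exact_mod_cast a.pos) (by linarith) hb

end Holder2

section Holder3
variable {M : Type*} [AddCommGroup M] {s : M → ℤ}

lemma smul_combine (q1 q2 p1 p2 : ℤ) (x y e : M) :
    (q1*q2) • (x+y) - (p1*q2 + q1*p2) • e = q2 • (q1 • x - p1 • e) + q1 • (q2 • y - p2 • e) := by
  rw [smul_add, smul_sub, smul_sub, smul_smul, smul_smul, smul_smul, smul_smul, add_smul]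
  rw [mul_comm q2 q1, mul_comm q2 p1]
  abel

lemma smul_combine3 (q1 q2 p1 p2 : ℤ) (x y e : M) :
    (p1*q2 + q1*p2) • e - (q1*q2) • (x+y) = q2 • (p1 • e - q1 • x) + q1 • (p2 • e - q2 • y) := by
  rw [smul_add, smul_sub, smul_sub, smul_smul, smul_smul, smul_smul, smul_smul, add_smul]
  rw [mul_comm q2 q1, mul_comm q2 p1]
  abel

lemma smul_combine2 (d n p : ℤ) (x e : M) : d•(n•e - x) + (d•x - p•e) = (d*n - p)•e := by
  rw [smul_sub, smul_smul, sub_smul]; abel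

lemma rat_mul_den (a : ℚ) : (a:ℚ) * (a.den:ℚ) = (a.num:ℚ) := by
  have hden : ((a.den : ℚ)) ≠ 0 := Nat.cast_ne_zero.2 a.den_nz
  rw [← eq_div_iff hden]
  exact (Rat.num_div_den a).symm

lemma rat_add_rep (a b : ℚ) :
    a + b = ((a.num * b.den + a.den * b.num : ℤ) : ℚ) / ((a.den * b.den : ℤ) : ℚ) := by
  have hda : ((a.den : ℚ)) ≠ 0 := Nat.cast_ne_zero.2 a.den_nz
  have hdb : ((b.den : ℚ)) ≠ 0 := Nat.cast_ne_zero.2 b.den_nz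
  rw [eq_div_iff (by push_cast; exact mul_ne_zero hda hdb)]
  push_cast
  calc (a + b) * ((a.den : ℚ) * (b.den : ℚ))
      = (a * a.den) * b.den + (b * b.den) * a.den := by ring
    _ = (a.num : ℚ) * b.den + (a.den : ℚ) * b.num := by rw [rat_mul_den, rat_mul_den]; ring

theorem SignFn.exists_additive (hs : SignFn s) :
    ∃ L : M → ℝ, (∀ x y, L (x + y) = L x + L y) ∧
      ∀ x, (0 < L x ↔ s x = 1) ∧ (L x = 0 ↔ s x = 0) := by
  by_cases hex : ∃ e, s e = 1
  case neg =>
    refine ⟨fun _ => 0, by simp, fun x => ?_⟩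
    have hx : s x = 0 := by
      rcases hs.range x with h | h | h
      · exfalso; exact hex ⟨-x, by rw [hs.odd, h]; rfl⟩
      · exact h
      · exact absurd ⟨x, h⟩ hex
    simp [hx]
  case pos =>
  obtain ⟨e, he⟩ := hex
  -- nonemptiness
  have hne : ∀ x : M, ∃ p : ℤ, ((p:ℚ)) ∈ hset s e x := by
    intro x
    obtain ⟨n, hn⟩ := hs.arch x e he
    refine ⟨-(n:ℤ), ?_⟩
    have hrep : ((-(n:ℤ) : ℤ) : ℚ) = ((-(n:ℤ) : ℤ) : ℚ) / ((1:ℤ) : ℚ) := by norm_num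
    rw [hrep, mem_hset_div hs e x _ 1 one_pos]
    have : (1:ℤ) • x - (-(n:ℤ)) • e = x + n • e := by
      rw [one_smul, neg_smul, sub_neg_eq_add, natCast_zsmul]
    rw [this, hn]; omega
  -- upper bounds
  have hub : ∀ x : M, ∃ n : ℕ, ∀ q ∈ hset s e x, q ≤ (n:ℚ) := by
    intro x
    obtain ⟨n, hn⟩ := hs.arch (-x) e he
    refine ⟨n, fun q hq => ?_⟩
    by_contra hlt
    push_neg at hlt
    have hcross : (n:ℤ) * q.den < q.num := by
      have hd : (0:ℚ) < (q.den : ℚ) := by exact_mod_cast q.pos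
      have h2 : (n:ℚ) * q.den < q.num := by
        have := mul_lt_mul_of_pos_right hlt hd
        rwa [rat_mul_den q] at this
      exact_mod_cast h2
    have h1 : s ((n:ℤ) • e - x) = 1 := by
      have : -x + n • e = (n:ℤ) • e - x := by rw [natCast_zsmul]; abel
      rwa [this] at hn
    have h2 : s ((q.den:ℤ) • ((n:ℤ) • e - x)) = 1 := by
      rw [hs.zsmul_sign _ (by exact_mod_cast q.pos)]; exact h1
    have h3 := hs.pos _ _ h2 hq
    rw [smul_combine2] at h3
    have hneg : (0:ℤ) < q.num - (q.den:ℤ) * n := by nlinarith [hcross]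
    have h4 : s ((q.num - (q.den:ℤ)*n) • e) = 1 := smul_e_pos hs he _ hneg
    have h5 : ((q.den:ℤ) * n - q.num) • e = -((q.num - (q.den:ℤ)*n) • e) := by
      rw [← neg_smul]; congr 1; ring
    rw [h5, hs.odd] at h3
    omega
  classical
  set L : M → ℝ := fun x => sSup ((fun q : ℚ => (q:ℝ)) '' hset s e x) with hL
  have hneR : ∀ x, ((fun q : ℚ => (q:ℝ)) '' hset s e x).Nonempty := by
    intro x; obtain ⟨p, hp⟩ := hne x; exact ⟨(p:ℚ), ⟨_, hp, rfl⟩⟩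
  have hbddR : ∀ x, BddAbove ((fun q : ℚ => (q:ℝ)) '' hset s e x) := by
    intro x; obtain ⟨n, hn⟩ := hub x
    refine ⟨(n:ℝ), fun y hy => ?_⟩
    obtain ⟨q, hq, rfl⟩ := hy
    have := hn q hq
    show (q:ℝ) ≤ (n:ℝ)
    exact_mod_cast this
  have hle : ∀ x (q : ℚ), q ∈ hset s e x → (q:ℝ) ≤ L x := by
    intro x q hq; exact le_csSup (hbddR x) ⟨q, hq, rfl⟩
  have hLub : ∀ x (b : ℝ), (∀ q ∈ hset s e x, (q:ℝ) ≤ b) → L x ≤ b := by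
    intro x b hb
    refine csSup_le (hneR x) ?_
    rintro y ⟨q, hq, rfl⟩; exact hb q hq
  have hnotmem : ∀ x (q : ℚ), L x < (q:ℝ) → q ∉ hset s e x := by
    intro x q h hq; exact absurd (hle x q hq) (not_le.2 h)
  have hnot1 : ∀ x (q : ℚ), q ∉ hset s e x → s (q.num • e - (q.den:ℤ) • x) = 1 := by
    intro x q hq
    have h1 : ¬ (0 ≤ s ((q.den:ℤ) • x - q.num • e)) := hq
    have h2 : s ((q.den:ℤ) • x - q.num • e) = -1 := by
      rcases hs.range ((q.den:ℤ) • x - q.num • e) with h | h | h <;> omega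
    have := hs.odd ((q.den:ℤ) • x - q.num • e)
    rw [neg_sub] at this
    omega
  -- addition of members
  have hadd_mem : ∀ x y (a b : ℚ), a ∈ hset s e x → b ∈ hset s e y →
      a + b ∈ hset s e (x + y) := by
    intro x y a b ha hb
    rw [rat_add_rep a b, mem_hset_div hs e _ _ _
      (by positivity : (0:ℤ) < (a.den * b.den : ℤ))]
    rw [smul_combine (a.den:ℤ) (b.den:ℤ) a.num b.num x y e]
    have h1 : 0 ≤ s ((b.den:ℤ) • ((a.den:ℤ) • x - a.num • e)) := by
      rw [hs.zsmul_sign _ (by exact_mod_cast b.pos)]; exact ha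
    have h2 : 0 ≤ s ((a.den:ℤ) • ((b.den:ℤ) • y - b.num • e)) := by
      rw [hs.zsmul_sign _ (by exact_mod_cast a.pos)]; exact hb
    exact hs.nn _ _ h1 h2
  -- non-members give upper bounds of the sum set
  have hsub : ∀ x y (r t : ℚ), r ∉ hset s e x → t ∉ hset s e y →
      ∀ w ∈ hset s e (x + y), w ≤ r + t := by
    intro x y r t hr ht w hw
    have h1 := hnot1 x r hr
    have h2 := hnot1 y t ht
    have hnotadd : r + t ∉ hset s e (x + y) := by
      intro hmem
      rw [rat_add_rep r t, mem_hset_div hs e _ _ _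
        (by positivity : (0:ℤ) < (r.den * t.den : ℤ))] at hmem
      have h3 : s ((t.den:ℤ) • (r.num • e - (r.den:ℤ) • x)) = 1 := by
        rw [hs.zsmul_sign _ (by exact_mod_cast t.pos)]; exact h1
      have h4 : 0 ≤ s ((r.den:ℤ) • (t.num • e - (t.den:ℤ) • y)) := by
        rw [hs.zsmul_sign _ (by exact_mod_cast r.pos), h2]; omega
      have h5 := hs.pos _ _ h3 h4
      rw [← smul_combine3 (r.den:ℤ) (t.den:ℤ) r.num t.num x y e] at h5
      have h6 := hs.odd ((r.num * t.den + r.den * t.num) • e - ((r.den:ℤ) * t.den) • (x + y))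
      rw [neg_sub] at h6
      rw [h5] at h6
      omega
    by_contra hlt
    push_neg at hlt
    exact hnotadd (hset_down hs he _ _ _ (le_of_lt hlt) hw)
  -- additivity
  have Ladd : ∀ x y, L (x + y) = L x + L y := by
    intro x y
    apply le_antisymm
    · apply le_of_forall_pos_le_add
      intro ε hε
      obtain ⟨r, hr1, hr2⟩ := exists_rat_btwn (show L x < L x + ε/2 by linarith)
      obtain ⟨t, ht1, ht2⟩ := exists_rat_btwn (show L y < L y + ε/2 by linarith)
      have hrn := hnotmem x r hr1
      have htn := hnotmem y t ht1
      have := hsub x y r t hrn htn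
      have hb : L (x + y) ≤ ((r + t : ℚ) : ℝ) := hLub _ _ (fun q hq =>
        Rat.cast_le.2 (this q hq))
      push_cast at hb
      linarith
    · -- L x + L y ≤ L (x+y)
      have key : ∀ a ∈ hset s e x, ∀ b ∈ hset s e y, (a:ℝ) + b ≤ L (x + y) := by
        intro a ha b hb
        have := hle (x+y) (a+b) (hadd_mem x y a b ha hb)
        push_cast at this
        linarith
      have h1 : L x ≤ L (x + y) - L y := by
        apply hLub
        intro a ha
        rw [le_sub_iff_add_le]
        have h2 : L y ≤ L (x+y) - (a:ℝ) := by
          apply hLub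
          intro b hb
          have := key a ha b hb
          linarith
        linarith
      linarith
  -- signs
  have hzeroL : ∀ x, s x = 0 → L x = 0 := by
    intro x hx
    have hmem : (0:ℚ) ∈ hset s e x := by
      show 0 ≤ s (((0:ℚ).den : ℤ) • x - (0:ℚ).num • e)
      norm_num [Rat.num_ofNat]
      omega
    have hub0 : ∀ q ∈ hset s e x, q ≤ (0:ℚ) := by
      intro q hq
      by_contra hlt
      push_neg at hlt
      have hnum : 0 < q.num := Rat.num_pos.2 hlt
      have h1 : s ((q.den:ℤ) • x) = 0 := by
        rw [hs.zsmul_sign _ (by exact_mod_cast q.pos)]; exact hx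
      have h2 : s ((q.den:ℤ) • x - q.num • e) = s (-(q.num • e)) := by
        have : (q.den:ℤ) • x - q.num • e = -(q.num • e) + (q.den:ℤ) • x := by abel
        rw [this, hs.addzero _ _ h1]
      have h3 : s (-(q.num • e)) = -1 := by
        rw [hs.odd, smul_e_pos hs he _ hnum]
      have h4 : 0 ≤ s ((q.den:ℤ) • x - q.num • e) := hq
      rw [h2, h3] at h4
      omega
    have : IsGreatest ((fun q : ℚ => (q:ℝ)) '' hset s e x) 0 := by
      constructor
      · exact ⟨0, hmem, by norm_num⟩
      · rintro y ⟨q, hq, rfl⟩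
        have := Rat.cast_le (K := ℝ).2 (hub0 q hq)
        simpa using this
    exact this.csSup_eq
  have hposL : ∀ x, s x = 1 → 0 < L x := by
    intro x hx
    obtain ⟨n, hn⟩ := hs.arch (-e) x hx
    have hn0 : n ≠ 0 := by
      intro h; subst h; simp only [zero_smul, add_zero] at hn
      have := hs.odd e; omega
    have hmem : ((1:ℤ):ℚ)/((n:ℤ):ℚ) ∈ hset s e x := by
      rw [mem_hset_div hs e x 1 (n:ℤ) (by exact_mod_cast Nat.pos_of_ne_zero hn0)]
      have : (n:ℤ) • x - (1:ℤ) • e = -e + n • x := by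
        rw [one_smul, natCast_zsmul]; abel
      rw [this, hn]; omega
    have hle1 := hle x _ hmem
    have hnpos : (0:ℝ) < (n:ℝ) := by exact_mod_cast Nat.pos_of_ne_zero hn0
    push_cast at hle1
    have hpos : (0:ℝ) < 1/(n:ℝ) := by positivity
    linarith
  have hnegL : ∀ x, s x = -1 → L x < 0 := by
    intro x hx
    have h1 : s (-x) = 1 := by rw [hs.odd]; omega
    have h2 := hposL _ h1
    have h3 := Ladd x (-x)
    rw [add_neg_cancel, hzeroL 0 hs.zero] at h3
    linarith
  refine ⟨L, Ladd, fun x => ?_⟩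
  constructor
  · constructor
    · intro h
      rcases hs.range x with hc | hc | hc
      · exact absurd (hnegL x hc) (by linarith)
      · exact absurd (hzeroL x hc) (by linarith)
      · exact hc
    · exact hposL x
  · constructor
    · intro h
      rcases hs.range x with hc | hc | hc
      · exact absurd (hnegL x hc) (by linarith)
      · exact hc
      · exact absurd (hposL x hc) (by linarith)
    · exact hzeroL x

end Holder3

section Coeffs
variable {V : Type*} [Fintype V] [DecidableEq V]

/-- Hypotheses on the one-pair decision function for integer voting situations. -/
structure GoodG (g : (V → ℕ) → ℤ) : Prop where
  range : ∀ P, g P = -1 ∨ g P = 0 ∨ g P = 1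
  zero : g 0 = 0
  one : g (fun _ => 1) = 0
  pos : ∀ P Q, g P = 1 → 0 ≤ g Q → g (P + Q) = 1
  nn : ∀ P Q, 0 ≤ g P → 0 ≤ g Q → 0 ≤ g (P + Q)
  neg : ∀ P Q, g P = -1 → g Q ≤ 0 → g (P + Q) = -1
  np : ∀ P Q, g P ≤ 0 → g Q ≤ 0 → g (P + Q) ≤ 0
  arch : ∀ P Q, g Q = 1 → ∃ n : ℕ, g (P + n • Q) = 1

namespace GoodG
variable {g : (V → ℕ) → ℤ}

lemma addzero (hg : GoodG g) (P Q : V → ℕ) (hQ : g Q = 0) : g (P + Q) = g P := by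
  rcases hg.range P with h | h | h
  · rw [h]; exact hg.neg P Q h (by omega)
  · rw [h]
    have h1 := hg.nn P Q (by omega) (by omega)
    have h2 := hg.np P Q (by omega) (by omega)
    omega
  · rw [h]; exact hg.pos P Q h (by omega)

lemma const_add (hg : GoodG g) (j : ℕ) (P : V → ℕ) : g (P + fun _ => j) = g P := by
  induction j with
  | zero => show g (P + 0) = g P; rw [add_zero]
  | succ m ih =>
    have : (P + fun _ => m + 1) = (P + fun _ => m) + fun _ => 1 := by
      funext π; show P π + (m+1) = (P π + m) + 1; omega
    rw [this, hg.addzero _ _ hg.one, ih]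

end GoodG

lemma toNat_nat_mul (n : ℕ) (b : ℤ) (hb : 0 ≤ b) : ((n:ℤ) * b).toNat = n * b.toNat := by
  lift b to ℕ using hb
  rw [← Nat.cast_mul, Int.toNat_natCast, Int.toNat_natCast]

theorem GoodG.exists_coeffs {g : (V → ℕ) → ℤ} (hg : GoodG g) :
    ∃ lam : V → ℝ, ∀ P : V → ℕ,
      (0 < ∑ π : V, (P π : ℝ) * lam π ↔ g P = 1) ∧
      ((∑ π : V, (P π : ℝ) * lam π) = 0 ↔ g P = 0) := by
  classical
  set tn : (V → ℤ) → ℕ → (V → ℕ) := fun x m => fun π => (x π + m).toNat with htn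
  set B : (V → ℤ) → ℕ := fun x => Finset.univ.sup fun π => (x π).natAbs with hBdef
  set sh : (V → ℤ) → ℤ := fun x => g (tn x (B x)) with hsh
  have hB : ∀ (x : V → ℤ) π, 0 ≤ x π + (B x : ℤ) := by
    intro x π
    have : (x π).natAbs ≤ B x := by
      rw [hBdef]; exact Finset.le_sup (f := fun π => (x π).natAbs) (Finset.mem_univ π)
    omega
  have key : ∀ (x : V → ℤ) (m m' : ℕ), (∀ π, 0 ≤ x π + m) → m ≤ m' →
      g (tn x m') = g (tn x m) := by
    intro x m m' hm hle
    obtain ⟨j, rfl⟩ := Nat.exists_eq_add_of_le hle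
    have ht : tn x (m + j) = tn x m + fun _ => j := by
      funext π
      show (x π + (m + j : ℕ)).toNat = (x π + m).toNat + j
      have := hm π
      push_cast
      omega
    rw [ht, hg.const_add j]
  have wd : ∀ (x : V → ℤ) (m : ℕ), (∀ π, 0 ≤ x π + m) → sh x = g (tn x m) := by
    intro x m hm
    rcases le_total m (B x) with h | h
    · exact key x m (B x) hm h
    · exact (key x (B x) m (hB x) h).symm
  have shnat : ∀ P : V → ℕ, sh (fun π => (P π : ℤ)) = g P := by
    intro P
    have ht : tn (fun π => (P π : ℤ)) 0 = P := by
      funext π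
      show ((P π : ℤ) + ((0:ℕ):ℤ)).toNat = P π
      omega
    rw [wd _ 0 (by intro π; positivity), ht]
  have hsf : SignFn sh := by
    constructor
    · intro x; exact hg.range _
    · rw [wd 0 0 (by intro π; norm_num)]
      have : tn 0 0 = 0 := by funext π; show ((0:ℤ) + ((0:ℕ):ℤ)).toNat = 0; omega
      rw [this, hg.zero]
    · -- odd
      intro x
      set m := B x ⊔ B (-x) with hm
      have hm1 : ∀ π, 0 ≤ x π + (m:ℤ) := by
        intro π
        have h1 := hB x π
        have h2 : (B x : ℤ) ≤ (m:ℤ) := by exact_mod_cast (le_sup_left : B x ≤ m)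
        omega
      have hm2 : ∀ π, 0 ≤ (-x) π + (m:ℤ) := by
        intro π
        have h1 := hB (-x) π
        have h2 : (B (-x) : ℤ) ≤ (m:ℤ) := by exact_mod_cast (le_sup_right : B (-x) ≤ m)
        omega
      have e1 : tn x m + tn (-x) m = (fun _ => 2*m : V → ℕ) := by
        funext π
        show (x π + (m:ℤ)).toNat + ((-x) π + (m:ℤ)).toNat = 2*m
        have h1 := hm1 π; have h2 := hm2 π
        have : (-x) π = -(x π) := rfl
        omega
      have hconst : g (fun _ => 2*m : V → ℕ) = 0 := by
        have := hg.const_add (2*m) 0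
        rwa [zero_add, hg.zero] at this
      have h0 : g (tn x m + tn (-x) m) = 0 := by rw [e1]; exact hconst
      have ha : sh x = g (tn x m) := wd x m hm1
      have hb : sh (-x) = g (tn (-x) m) := wd (-x) m hm2
      rw [ha, hb]
      rcases hg.range (tn x m) with h | h | h
      · rcases hg.range (tn (-x) m) with h' | h' | h'
        · have := hg.neg (tn x m) (tn (-x) m) h (by omega); omega
        · have := hg.neg (tn x m) (tn (-x) m) h (by omega); omega
        · omega
      · rcases hg.range (tn (-x) m) with h' | h' | h'
        · have := hg.neg (tn (-x) m) (tn x m) h' (by omega)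
          rw [add_comm] at this; omega
        · omega
        · have := hg.pos (tn (-x) m) (tn x m) h' (by omega)
          rw [add_comm] at this; omega
      · rcases hg.range (tn (-x) m) with h' | h' | h'
        · omega
        · have := hg.pos (tn x m) (tn (-x) m) h (by omega); omega
        · have := hg.pos (tn x m) (tn (-x) m) h (by omega); omega
    · -- nn
      intro x y hx hy
      set m := B x ⊔ B y with hm
      have hm1 : ∀ π, 0 ≤ x π + (m:ℤ) := by
        intro π; have h1 := hB x π
        have h2 : (B x : ℤ) ≤ (m:ℤ) := by exact_mod_cast (le_sup_left : B x ≤ m)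
        omega
      have hm2 : ∀ π, 0 ≤ y π + (m:ℤ) := by
        intro π; have h1 := hB y π
        have h2 : (B y : ℤ) ≤ (m:ℤ) := by exact_mod_cast (le_sup_right : B y ≤ m)
        omega
      have hm3 : ∀ π, 0 ≤ (x + y) π + ((m + m : ℕ):ℤ) := by
        intro π; have h1 := hm1 π; have h2 := hm2 π
        have : (x+y) π = x π + y π := rfl
        push_cast; omega
      have e1 : tn (x+y) (m+m) = tn x m + tn y m := by
        funext π
        show ((x+y) π + ((m+m:ℕ):ℤ)).toNat = (x π + (m:ℤ)).toNat + (y π + (m:ℤ)).toNat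
        have h1 := hm1 π; have h2 := hm2 π
        have : (x+y) π = x π + y π := rfl
        push_cast
        omega
      rw [wd x m hm1] at hx; rw [wd y m hm2] at hy
      rw [wd (x+y) (m+m) hm3, e1]
      exact hg.nn _ _ hx hy
    · -- pos
      intro x y hx hy
      set m := B x ⊔ B y with hm
      have hm1 : ∀ π, 0 ≤ x π + (m:ℤ) := by
        intro π; have h1 := hB x π
        have h2 : (B x : ℤ) ≤ (m:ℤ) := by exact_mod_cast (le_sup_left : B x ≤ m)
        omega
      have hm2 : ∀ π, 0 ≤ y π + (m:ℤ) := by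
        intro π; have h1 := hB y π
        have h2 : (B y : ℤ) ≤ (m:ℤ) := by exact_mod_cast (le_sup_right : B y ≤ m)
        omega
      have hm3 : ∀ π, 0 ≤ (x + y) π + ((m + m : ℕ):ℤ) := by
        intro π; have h1 := hm1 π; have h2 := hm2 π
        have : (x+y) π = x π + y π := rfl
        push_cast; omega
      have e1 : tn (x+y) (m+m) = tn x m + tn y m := by
        funext π
        show ((x+y) π + ((m+m:ℕ):ℤ)).toNat = (x π + (m:ℤ)).toNat + (y π + (m:ℤ)).toNat
        have h1 := hm1 π; have h2 := hm2 π
        have : (x+y) π = x π + y π := rfl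
        push_cast
        omega
      rw [wd x m hm1] at hx; rw [wd y m hm2] at hy
      rw [wd (x+y) (m+m) hm3, e1]
      exact hg.pos _ _ hx hy
    · -- arch
      intro x y hy
      have hQ : g (tn y (B y)) = 1 := by rw [← wd y (B y) (hB y)]; exact hy
      obtain ⟨n, hn⟩ := hg.arch (tn x (B x)) (tn y (B y)) hQ
      refine ⟨n, ?_⟩
      have hbound : ∀ π, 0 ≤ (x + n • y) π + ((B x + n * B y : ℕ):ℤ) := by
        intro π
        have h1 := hB x π; have h2 := hB y π
        have e : (x + n • y) π = x π + (n:ℤ) * y π := by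
          show x π + n • (y π) = x π + (n:ℤ) * y π
          rw [nsmul_eq_mul]
        rw [e]; push_cast
        nlinarith [h1, h2]
      rw [wd _ _ hbound]
      have e1 : tn (x + n • y) (B x + n * B y) = tn x (B x) + n • tn y (B y) := by
        funext π
        have h1 := hB x π; have h2 := hB y π
        show ((x + n • y) π + ((B x + n * B y:ℕ):ℤ)).toNat
            = (x π + (B x:ℤ)).toNat + n • (y π + (B y:ℤ)).toNat
        have e : (x + n • y) π = x π + (n:ℤ) * y π := by
          show x π + n • (y π) = x π + (n:ℤ) * y π
          rw [nsmul_eq_mul]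
        rw [e, smul_eq_mul]
        have e2 : x π + (n:ℤ) * y π + ((B x + n * B y:ℕ):ℤ)
            = (x π + B x) + (n:ℤ) * (y π + B y) := by push_cast; ring
        rw [e2, Int.toNat_add h1 (by positivity), toNat_nat_mul n _ h2]
      rw [e1]
      exact hn
  obtain ⟨L, Ladd, Lsign⟩ := hsf.exists_additive
  have L0 : L 0 = 0 := (Lsign 0).2.2 (by
    have : sh (0 : V → ℤ) = 0 := hsf.zero
    exact this)
  have Lneg : ∀ x, L (-x) = - L x := by
    intro x
    have := Ladd x (-x)
    rw [add_neg_cancel, L0] at this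
    linarith
  have Lsum : ∀ (t : Finset V) (F : V → (V → ℤ)),
      L (∑ i ∈ t, F i) = ∑ i ∈ t, L (F i) := by
    intro t F
    induction t using Finset.induction_on with
    | empty => simpa using L0
    | insert _ _ hnotmem ih =>
      rw [Finset.sum_insert hnotmem, Finset.sum_insert hnotmem, Ladd, ih]
  have Lnsmul : ∀ (n : ℕ) x, L (n • x) = n * L x := by
    intro n x
    induction n with
    | zero => simpa using L0
    | succ m ih => rw [succ_nsmul, Ladd, ih]; push_cast; ring
  set lam : V → ℝ := fun π => L ((Pi.single π (1:ℤ) : V → ℤ)) with hlam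
  have decomp : ∀ x : V → ℤ, L x = ∑ π : V, (x π : ℝ) * lam π := by
    intro x
    have hx : x = ∑ π : V, Pi.single π (x π) := (Finset.univ_sum_single x).symm
    have hsingle : ∀ π, (Pi.single π (x π) : V → ℤ) = (x π).toNat • (Pi.single π (1:ℤ) : V → ℤ)
        - (- x π).toNat • (Pi.single π (1:ℤ) : V → ℤ) := by
      intro π
      funext j
      rcases eq_or_ne j π with h | h
      · subst h
        rw [Pi.sub_apply, Pi.smul_apply, Pi.smul_apply, nsmul_eq_mul, nsmul_eq_mul,
          Pi.single_eq_same, Pi.single_eq_same]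
        omega
      · simp [Pi.single_apply, h]
    conv_lhs => rw [hx]
    rw [Lsum]
    apply Finset.sum_congr rfl
    intro π _
    have hl : L ((Pi.single π (1:ℤ) : V → ℤ)) = lam π := rfl
    rw [hsingle π, sub_eq_add_neg, Ladd, Lneg, Lnsmul, Lnsmul, hl]
    have hcast : ((x π).toNat : ℝ) - ((-x π).toNat : ℝ) = (x π : ℝ) := by
      have h1 : ((x π).toNat : ℤ) - ((-x π).toNat : ℤ) = x π := by omega
      exact_mod_cast h1
    linear_combination (lam π) * hcast
  refine ⟨lam, fun P => ?_⟩
  have hs1 := Lsign (fun π => (P π : ℤ))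
  rw [decomp] at hs1
  rw [shnat] at hs1
  have e : ∑ π : V, (((P π : ℤ)):ℝ) * lam π = ∑ π : V, (P π : ℝ) * lam π := by
    apply Finset.sum_congr rfl
    intro π _
    norm_num
  rw [e] at hs1
  exact hs1

end Coeffs

section Combinatorics
open Finset

lemma exists_equiv_pair {α β : Type*} [Fintype α] [DecidableEq α] [Fintype β] [DecidableEq β]
    (hcard : Fintype.card α = Fintype.card β) (s1 s2 : Finset α) (t1 t2 : Finset β)
    (h1 : s1.card = t1.card) (h2 : s2.card = t2.card)
    (h12 : (s1 ∩ s2).card = (t1 ∩ t2).card) :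
    ∃ e : α ≃ β, s1.image e = t1 ∧ s2.image e = t2 := by
  classical
  set p : α → Bool × Bool := fun a => (decide (a ∈ s1), decide (a ∈ s2)) with hp
  set q : β → Bool × Bool := fun b => (decide (b ∈ t1), decide (b ∈ t2)) with hqdef
  have fib : ∀ i : Bool × Bool, Fintype.card {a // p a = i} = Fintype.card {b // q b = i} := by
    intro i
    rw [Fintype.card_subtype, Fintype.card_subtype]
    have ett : Finset.univ.filter (fun a : α => p a = (true, true)) = s1 ∩ s2 := by
      ext a; simp [hp, Prod.ext_iff]
    have etf : Finset.univ.filter (fun a : α => p a = (true, false)) = s1 \ s2 := by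
      ext a; simp [hp, Prod.ext_iff]
    have eft : Finset.univ.filter (fun a : α => p a = (false, true)) = s2 \ s1 := by
      ext a; simp [hp, Prod.ext_iff]; tauto
    have eff : Finset.univ.filter (fun a : α => p a = (false, false)) = (s1 ∪ s2)ᶜ := by
      ext a; simp [hp, Prod.ext_iff]
    have ftt : Finset.univ.filter (fun b : β => q b = (true, true)) = t1 ∩ t2 := by
      ext b; simp [hqdef, Prod.ext_iff]
    have ftf : Finset.univ.filter (fun b : β => q b = (true, false)) = t1 \ t2 := by
      ext b; simp [hqdef, Prod.ext_iff]
    have fft : Finset.univ.filter (fun b : β => q b = (false, true)) = t2 \ t1 := by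
      ext b; simp [hqdef, Prod.ext_iff]; tauto
    have fff : Finset.univ.filter (fun b : β => q b = (false, false)) = (t1 ∪ t2)ᶜ := by
      ext b; simp [hqdef, Prod.ext_iff]
    have k1 : (s1 \ s2).card + (s1 ∩ s2).card = s1.card := Finset.card_sdiff_add_card_inter s1 s2
    have k2 : (s2 \ s1).card + (s2 ∩ s1).card = s2.card := Finset.card_sdiff_add_card_inter s2 s1
    have k3 : (t1 \ t2).card + (t1 ∩ t2).card = t1.card := Finset.card_sdiff_add_card_inter t1 t2
    have k4 : (t2 \ t1).card + (t2 ∩ t1).card = t2.card := Finset.card_sdiff_add_card_inter t2 t1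
    have k5 : (s1 ∪ s2).card + (s1 ∩ s2).card = s1.card + s2.card :=
      Finset.card_union_add_card_inter s1 s2
    have k6 : (t1 ∪ t2).card + (t1 ∩ t2).card = t1.card + t2.card :=
      Finset.card_union_add_card_inter t1 t2
    have k7 : ((s1 ∪ s2)ᶜ).card = Fintype.card α - (s1 ∪ s2).card := Finset.card_compl _
    have k8 : ((t1 ∪ t2)ᶜ).card = Fintype.card β - (t1 ∪ t2).card := Finset.card_compl _
    have k9 : (s1 ∪ s2).card ≤ Fintype.card α := Finset.card_le_univ _
    have k10 : (t1 ∪ t2).card ≤ Fintype.card β := Finset.card_le_univ _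
    have kinter1 : (s2 ∩ s1).card = (s1 ∩ s2).card := by rw [Finset.inter_comm]
    have kinter2 : (t2 ∩ t1).card = (t1 ∩ t2).card := by rw [Finset.inter_comm]
    rcases i with ⟨x, y⟩
    cases x <;> cases y
    · rw [eff, fff]; omega
    · rw [eft, fft]; omega
    · rw [etf, ftf]; omega
    · rw [ett, ftt]; omega
  have e0 : ∀ i : Bool × Bool, {a // p a = i} ≃ {b // q b = i} :=
    fun i => Fintype.equivOfCardEq (fib i)
  set e : α ≃ β :=
    (Equiv.sigmaFiberEquiv p).symm.trans ((Equiv.sigmaCongrRight e0).trans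
      (Equiv.sigmaFiberEquiv q)) with he
  have hq : ∀ a, q (e a) = p a := by
    intro a
    show q ((e0 (p a)) ⟨a, rfl⟩).1 = p a
    exact ((e0 (p a)) ⟨a, rfl⟩).2
  have hmem1 : ∀ a, (e a ∈ t1 ↔ a ∈ s1) := by
    intro a
    have := congrArg Prod.fst (hq a)
    simpa [hp, hqdef, decide_eq_decide] using this
  have hmem2 : ∀ a, (e a ∈ t2 ↔ a ∈ s2) := by
    intro a
    have := congrArg Prod.snd (hq a)
    simpa [hp, hqdef, decide_eq_decide] using this
  refine ⟨e, ?_, ?_⟩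
  · ext b
    simp only [Finset.mem_image]
    constructor
    · rintro ⟨a, ha, rfl⟩; exact (hmem1 a).2 ha
    · intro hb
      refine ⟨e.symm b, ?_, Equiv.apply_symm_apply e b⟩
      have := hmem1 (e.symm b)
      rw [Equiv.apply_symm_apply] at this
      exact this.1 hb
  · ext b
    simp only [Finset.mem_image]
    constructor
    · rintro ⟨a, ha, rfl⟩; exact (hmem2 a).2 ha
    · intro hb
      refine ⟨e.symm b, ?_, Equiv.apply_symm_apply e b⟩
      have := hmem2 (e.symm b)
      rw [Equiv.apply_symm_apply] at this
      exact this.1 hb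

end Combinatorics

section MainHelpers
open Finset
variable {A : Type*} [Fintype A] [DecidableEq A] {k : ℕ}

lemma finset_image_symm' {α β : Type*} [DecidableEq α] [DecidableEq β] (e : α ≃ β)
    (s : Finset α) (t : Finset β) (h : s.image e = t) : t.image e.symm = s := by
  rw [← h, Finset.image_image]
  simp only [Equiv.symm_comp_self, Finset.image_id]

lemma equiv_trans_cancel {α β γ : Type*} (σ : α ≃ β) (π : β ≃ γ) :
    σ.symm.trans (σ.trans π) = π := by
  ext a; simp

lemma vote_reindex (σ : Equiv.Perm A) (h : Vote A → ℝ) :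
    ∑ π : Vote A, h (σ.trans π) = ∑ π : Vote A, h π := by
  exact Fintype.sum_equiv
    ⟨fun π => σ.trans π, fun π => σ.symm.trans π,
      fun π => equiv_trans_cancel σ π,
      fun π => by ext a; simp⟩
    (fun π => h (σ.trans π)) h (fun π => rfl)

lemma pair_transport (C1 C2 D1 D2 : Committee A k)
    (h : (C1.1 ∩ C2.1).card = (D1.1 ∩ D2.1).card) :
    ∃ σ : Equiv.Perm A, C1.1.image σ = D1.1 ∧ C2.1.image σ = D2.1 :=
  exists_equiv_pair rfl C1.1 C2.1 D1.1 D2.1 (C1.2.trans D1.2.symm) (C2.2.trans D2.2.symm) h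

lemma realize_vote (C1 C2 : Committee A k) (I J : Finset (Fin (Fintype.card A)))
    (hI : I.card = k) (hJ : J.card = k) (hIJ : (C1.1 ∩ C2.1).card = (I ∩ J).card) :
    ∃ π : Vote A, π.pos C1.1 = I ∧ π.pos C2.1 = J := by
  obtain ⟨e, he1, he2⟩ := exists_equiv_pair (by simp) C1.1 C2.1 I J
    (C1.2.trans hI.symm) (C2.2.trans hJ.symm) hIJ
  exact ⟨e, he1, he2⟩

variable (f : DecisionRule A k ℕ)

lemma permComm_eq (σ : Equiv.Perm A) (C D : Committee A k) (h : C.1.image σ = D.1) :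
    permComm σ C = D := Subtype.ext h

lemma F_zero (hN : f.Neutral) (C1 C2 : Committee A k) : f.F 0 C1 C2 = 0 := by
  obtain ⟨σ, hσ1, hσ2⟩ := pair_transport C1 C2 C2 C1 (by rw [Finset.inter_comm])
  have h := hN σ 0 C1 C2
  rw [show permSitu σ (0 : Vote A → ℕ) = 0 from rfl,
    permComm_eq σ C1 C2 hσ1, permComm_eq σ C2 C1 hσ2] at h
  have ha := f.antisymm 0 C2 C1
  omega

lemma F_one (hN : f.Neutral) (C1 C2 : Committee A k) : f.F 1 C1 C2 = 0 := by
  obtain ⟨σ, hσ1, hσ2⟩ := pair_transport C1 C2 C2 C1 (by rw [Finset.inter_comm])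
  have h := hN σ 1 C1 C2
  rw [show permSitu σ (1 : Vote A → ℕ) = 1 from rfl,
    permComm_eq σ C1 C2 hσ1, permComm_eq σ C2 C1 hσ2] at h
  have ha := f.antisymm 1 C2 C1
  omega

lemma goodG_pair (hN : f.Neutral) (hC : f.Consistent) (hCont : f.IsContinuous)
    (C1 C2 : Committee A k) : GoodG (fun P => f.F P C1 C2) := by
  constructor
  · exact fun P => f.mem_range P C1 C2
  · exact F_zero f hN C1 C2
  · exact F_one f hN C1 C2
  · exact fun P Q h1 h2 => (hC P Q C1 C2).1 h1 h2
  · exact fun P Q => (hC P Q C1 C2).2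
  · intro P Q h1 h2
    have a1 := f.antisymm P C2 C1
    have a2 := f.antisymm Q C2 C1
    have a3 := f.antisymm (P + Q) C2 C1
    have := (hC P Q C2 C1).1 (by omega) (by omega)
    omega
  · intro P Q h1 h2
    have a1 := f.antisymm P C2 C1
    have a2 := f.antisymm Q C2 C1
    have a3 := f.antisymm (P + Q) C2 C1
    have := (hC P Q C2 C1).2 (by omega) (by omega)
    omega
  · exact fun P Q h => hCont P Q C1 C2 h

end MainHelpers

section Mu
open Finset
variable {A : Type*} [Fintype A] [DecidableEq A] {k : ℕ} (f : DecisionRule A k ℕ)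

lemma image_trans_eq {α β γ : Type*} [DecidableEq β] [DecidableEq γ]
    (σ : β ≃ γ) (τ : α ≃ β) (s : Finset α) (t : Finset β) (u : Finset γ)
    (h1 : s.image τ = t) (h2 : t.image σ = u) : s.image (τ.trans σ) = u := by
  rw [show ⇑(τ.trans σ) = ⇑σ ∘ ⇑τ from rfl, ← Finset.image_image, h1, h2]

lemma exists_mu (hN : f.Neutral) (hC : f.Consistent) (hCont : f.IsContinuous)
    (C1 C2 : Committee A k) :
    ∃ mu : Vote A → ℝ,
      (∀ P : Vote A → ℕ,
        (0 < ∑ π : Vote A, (P π : ℝ) * mu π ↔ f.F P C1 C2 = 1) ∧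
        ((∑ π : Vote A, (P π : ℝ) * mu π) = 0 ↔ f.F P C1 C2 = 0)) ∧
      (∀ π π' : Vote A, π.pos C1.1 = π'.pos C1.1 → π.pos C2.1 = π'.pos C2.1 → mu π' = mu π) ∧
      (∀ π π' : Vote A, π'.pos C1.1 = π.pos C2.1 → π'.pos C2.1 = π.pos C1.1 →
        mu π' = - mu π) := by
  classical
  obtain ⟨lam, hlam⟩ := (goodG_pair f hN hC hCont C1 C2).exists_coeffs
  set Stab : Finset (Equiv.Perm A) :=
    Finset.univ.filter (fun σ => C1.1.image σ = C1.1 ∧ C2.1.image σ = C2.1) with hStab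
  set Swp : Finset (Equiv.Perm A) :=
    Finset.univ.filter (fun σ => C1.1.image σ = C2.1 ∧ C2.1.image σ = C1.1) with hSwp
  have hStabMem : ∀ σ, σ ∈ Stab ↔ (C1.1.image σ = C1.1 ∧ C2.1.image σ = C2.1) := by
    intro σ; rw [hStab]; simp
  have hSwpMem : ∀ σ, σ ∈ Swp ↔ (C1.1.image σ = C2.1 ∧ C2.1.image σ = C1.1) := by
    intro σ; rw [hSwp]; simp
  set mu : Vote A → ℝ :=
    fun π => (∑ σ ∈ Stab, lam (σ.symm.trans π)) - ∑ σ ∈ Swp, lam (σ.symm.trans π) with hmu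
  have score_eq : ∀ P : Vote A → ℕ,
      ∑ π : Vote A, (P π : ℝ) * mu π
        = (∑ σ ∈ Stab, ∑ π : Vote A, ((permSitu σ P) π : ℝ) * lam π)
          - ∑ σ ∈ Swp, ∑ π : Vote A, ((permSitu σ P) π : ℝ) * lam π := by
    intro P
    have hterm : ∀ σ : Equiv.Perm A,
        ∑ π : Vote A, ((permSitu σ P) π : ℝ) * lam π
          = ∑ π : Vote A, (P π : ℝ) * lam (σ.symm.trans π) := by
      intro σ
      have hre := vote_reindex σ (fun ρ => (P ρ : ℝ) * lam (σ.symm.trans ρ))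
      rw [← hre]
      apply Finset.sum_congr rfl
      intro π _
      rw [equiv_trans_cancel]
      rfl
    calc ∑ π : Vote A, (P π : ℝ) * mu π
        = ∑ π : Vote A, ((∑ σ ∈ Stab, (P π : ℝ) * lam (σ.symm.trans π))
            - ∑ σ ∈ Swp, (P π : ℝ) * lam (σ.symm.trans π)) := by
          apply Finset.sum_congr rfl; intro π _
          rw [hmu, mul_sub, Finset.mul_sum, Finset.mul_sum]
      _ = (∑ π : Vote A, ∑ σ ∈ Stab, (P π : ℝ) * lam (σ.symm.trans π))
            - ∑ π : Vote A, ∑ σ ∈ Swp, (P π : ℝ) * lam (σ.symm.trans π) :=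
          Finset.sum_sub_distrib _ _
      _ = (∑ σ ∈ Stab, ∑ π : Vote A, (P π : ℝ) * lam (σ.symm.trans π))
            - ∑ σ ∈ Swp, ∑ π : Vote A, (P π : ℝ) * lam (σ.symm.trans π) := by
          rw [Finset.sum_comm (s := (Finset.univ : Finset (Vote A))) (t := Stab),
            Finset.sum_comm (s := (Finset.univ : Finset (Vote A))) (t := Swp)]
      _ = _ := by
          congr 1
          · exact (Finset.sum_congr rfl (fun σ _ => (hterm σ).symm))
          · exact (Finset.sum_congr rfl (fun σ _ => (hterm σ).symm))
  have hStabF : ∀ σ ∈ Stab, ∀ P, f.F (permSitu σ P) C1 C2 = f.F P C1 C2 := by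
    intro σ hσ P
    obtain ⟨h1, h2⟩ := (hStabMem σ).1 hσ
    have h := hN σ P C1 C2
    rwa [permComm_eq σ C1 C1 h1, permComm_eq σ C2 C2 h2] at h
  have hSwpF : ∀ σ ∈ Swp, ∀ P, f.F (permSitu σ P) C1 C2 = - f.F P C1 C2 := by
    intro σ hσ P
    obtain ⟨h1, h2⟩ := (hSwpMem σ).1 hσ
    have h := hN σ P C1 C2
    rw [permComm_eq σ C1 C2 h1, permComm_eq σ C2 C1 h2] at h
    have ha := f.antisymm (permSitu σ P) C1 C2
    omega
  have honeStab : (1 : Equiv.Perm A) ∈ Stab := by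
    refine (hStabMem 1).2 ⟨?_, ?_⟩ <;> simp
  have hSwpNe : Swp.Nonempty := by
    obtain ⟨σ, h1, h2⟩ := pair_transport C1 C2 C2 C1 (by rw [Finset.inter_comm])
    exact ⟨σ, (hSwpMem σ).2 ⟨h1, h2⟩⟩
  have sign1 : ∀ P : Vote A → ℕ, f.F P C1 C2 = 1 →
      0 < ∑ π : Vote A, (P π : ℝ) * mu π := by
    intro P hF
    rw [score_eq]
    have h1 : 0 < ∑ σ ∈ Stab, ∑ π : Vote A, ((permSitu σ P) π : ℝ) * lam π := by
      refine Finset.sum_pos ?_ ⟨1, honeStab⟩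
      intro σ hσ
      exact (hlam (permSitu σ P)).1.2 (by rw [hStabF σ hσ P]; exact hF)
    have h2 : ∑ σ ∈ Swp, ∑ π : Vote A, ((permSitu σ P) π : ℝ) * lam π ≤ 0 := by
      refine Finset.sum_nonpos ?_
      intro σ hσ
      by_contra hgt
      push_neg at hgt
      have hF1 := (hlam (permSitu σ P)).1.1 hgt
      have hF2 := hSwpF σ hσ P
      omega
    linarith
  have sign0 : ∀ P : Vote A → ℕ, f.F P C1 C2 = 0 →
      (∑ π : Vote A, (P π : ℝ) * mu π) = 0 := by
    intro P hF
    rw [score_eq]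
    have h1 : ∑ σ ∈ Stab, ∑ π : Vote A, ((permSitu σ P) π : ℝ) * lam π = 0 := by
      refine Finset.sum_eq_zero ?_
      intro σ hσ
      exact (hlam (permSitu σ P)).2.2 (by rw [hStabF σ hσ P]; exact hF)
    have h2 : ∑ σ ∈ Swp, ∑ π : Vote A, ((permSitu σ P) π : ℝ) * lam π = 0 := by
      refine Finset.sum_eq_zero ?_
      intro σ hσ
      refine (hlam (permSitu σ P)).2.2 ?_
      have := hSwpF σ hσ P
      omega
    rw [h1, h2, sub_zero]
  have signm : ∀ P : Vote A → ℕ, f.F P C1 C2 = -1 →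
      (∑ π : Vote A, (P π : ℝ) * mu π) < 0 := by
    intro P hF
    rw [score_eq]
    have h1 : ∑ σ ∈ Stab, ∑ π : Vote A, ((permSitu σ P) π : ℝ) * lam π ≤ 0 := by
      refine Finset.sum_nonpos ?_
      intro σ hσ
      by_contra hgt
      push_neg at hgt
      have hF1 := (hlam (permSitu σ P)).1.1 hgt
      have hF2 := hStabF σ hσ P
      omega
    have h2 : 0 < ∑ σ ∈ Swp, ∑ π : Vote A, ((permSitu σ P) π : ℝ) * lam π := by
      refine Finset.sum_pos ?_ hSwpNe
      intro σ hσ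
      refine (hlam (permSitu σ P)).1.2 ?_
      have := hSwpF σ hσ P
      omega
    linarith
  refine ⟨mu, fun P => ⟨⟨?_, sign1 P⟩, ⟨?_, sign0 P⟩⟩, ?_, ?_⟩
  · intro h
    rcases f.mem_range P C1 C2 with hc | hc | hc
    · have := signm P hc; linarith
    · have := sign0 P hc; linarith
    · exact hc
  · intro h
    rcases f.mem_range P C1 C2 with hc | hc | hc
    · have := signm P hc; linarith
    · exact hc
    · have := sign1 P hc; linarith
  · -- class invariance
    intro π π' h1 h2
    have h1' : C1.1.image ⇑π = C1.1.image ⇑π' := h1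
    have h2' : C2.1.image ⇑π = C2.1.image ⇑π' := h2
    set ρ : Equiv.Perm A := π'.trans π.symm with hρ
    have hρπ : ρ.trans π = π' := by ext a; simp [hρ]
    have hρ1 : C1.1.image ⇑ρ = C1.1 := by
      have e : C1.1.image ⇑ρ = (C1.1.image ⇑π').image ⇑π.symm := by
        rw [Finset.image_image]; rfl
      rw [e, ← h1']
      exact finset_image_symm' π C1.1 _ rfl
    have hρ2 : C2.1.image ⇑ρ = C2.1 := by
      have e : C2.1.image ⇑ρ = (C2.1.image ⇑π').image ⇑π.symm := by
        rw [Finset.image_image]; rfl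
      rw [e, ← h2']
      exact finset_image_symm' π C2.1 _ rfl
    have hρ1s : C1.1.image ⇑ρ.symm = C1.1 := finset_image_symm' ρ _ _ hρ1
    have hρ2s : C2.1.image ⇑ρ.symm = C2.1 := finset_image_symm' ρ _ _ hρ2
    have e1 : ∑ σ ∈ Stab, lam (σ.symm.trans π') = ∑ σ ∈ Stab, lam (σ.symm.trans π) := by
      refine Finset.sum_nbij' (fun σ => ρ.symm.trans σ) (fun τ => ρ.trans τ) ?_ ?_ ?_ ?_ ?_
      · intro σ hσ
        obtain ⟨a1, a2⟩ := (hStabMem σ).1 hσ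
        exact (hStabMem _).2 ⟨image_trans_eq σ ρ.symm _ _ _ hρ1s a1,
          image_trans_eq σ ρ.symm _ _ _ hρ2s a2⟩
      · intro τ hτ
        obtain ⟨a1, a2⟩ := (hStabMem τ).1 hτ
        exact (hStabMem _).2 ⟨image_trans_eq τ ρ _ _ _ hρ1 a1,
          image_trans_eq τ ρ _ _ _ hρ2 a2⟩
      · intro σ _; ext a; simp
      · intro τ _; ext a; simp
      · intro σ _
        congr 1
        rw [← hρπ]; ext a; simp
    have e2 : ∑ σ ∈ Swp, lam (σ.symm.trans π') = ∑ σ ∈ Swp, lam (σ.symm.trans π) := by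
      refine Finset.sum_nbij' (fun σ => ρ.symm.trans σ) (fun τ => ρ.trans τ) ?_ ?_ ?_ ?_ ?_
      · intro σ hσ
        obtain ⟨a1, a2⟩ := (hSwpMem σ).1 hσ
        exact (hSwpMem _).2 ⟨image_trans_eq σ ρ.symm _ _ _ hρ1s a1,
          image_trans_eq σ ρ.symm _ _ _ hρ2s a2⟩
      · intro τ hτ
        obtain ⟨a1, a2⟩ := (hSwpMem τ).1 hτ
        exact (hSwpMem _).2 ⟨image_trans_eq τ ρ _ _ _ hρ1 a1,
          image_trans_eq τ ρ _ _ _ hρ2 a2⟩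
      · intro σ _; ext a; simp
      · intro τ _; ext a; simp
      · intro σ _
        congr 1
        rw [← hρπ]; ext a; simp
    simp only [hmu]
    rw [e1, e2]
  · -- antisymmetry
    intro π π' h1 h2
    have h1' : C1.1.image ⇑π' = C2.1.image ⇑π := h1
    have h2' : C2.1.image ⇑π' = C1.1.image ⇑π := h2
    set ρ : Equiv.Perm A := π'.trans π.symm with hρ
    have hρπ : ρ.trans π = π' := by ext a; simp [hρ]
    have hρ1 : C1.1.image ⇑ρ = C2.1 := by
      have e : C1.1.image ⇑ρ = (C1.1.image ⇑π').image ⇑π.symm := by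
        rw [Finset.image_image]; rfl
      rw [e, h1']
      exact finset_image_symm' π C2.1 _ rfl
    have hρ2 : C2.1.image ⇑ρ = C1.1 := by
      have e : C2.1.image ⇑ρ = (C2.1.image ⇑π').image ⇑π.symm := by
        rw [Finset.image_image]; rfl
      rw [e, h2']
      exact finset_image_symm' π C1.1 _ rfl
    have hρ1s : C1.1.image ⇑ρ.symm = C2.1 := finset_image_symm' ρ _ _ hρ2
    have hρ2s : C2.1.image ⇑ρ.symm = C1.1 := finset_image_symm' ρ _ _ hρ1
    have e1 : ∑ σ ∈ Stab, lam (σ.symm.trans π') = ∑ σ ∈ Swp, lam (σ.symm.trans π) := by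
      refine Finset.sum_nbij' (fun σ => ρ.symm.trans σ) (fun τ => ρ.trans τ) ?_ ?_ ?_ ?_ ?_
      · intro σ hσ
        obtain ⟨a1, a2⟩ := (hStabMem σ).1 hσ
        exact (hSwpMem _).2 ⟨image_trans_eq σ ρ.symm _ _ _ hρ1s a2,
          image_trans_eq σ ρ.symm _ _ _ hρ2s a1⟩
      · intro τ hτ
        obtain ⟨a1, a2⟩ := (hSwpMem τ).1 hτ
        exact (hStabMem _).2 ⟨image_trans_eq τ ρ _ _ _ hρ1 a2,
          image_trans_eq τ ρ _ _ _ hρ2 a1⟩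
      · intro σ _; ext a; simp
      · intro τ _; ext a; simp
      · intro σ _
        congr 1
        rw [← hρπ]; ext a; simp
    have e2 : ∑ σ ∈ Swp, lam (σ.symm.trans π') = ∑ σ ∈ Stab, lam (σ.symm.trans π) := by
      refine Finset.sum_nbij' (fun σ => ρ.symm.trans σ) (fun τ => ρ.trans τ) ?_ ?_ ?_ ?_ ?_
      · intro σ hσ
        obtain ⟨a1, a2⟩ := (hSwpMem σ).1 hσ
        exact (hStabMem _).2 ⟨image_trans_eq σ ρ.symm _ _ _ hρ1s a2,
          image_trans_eq σ ρ.symm _ _ _ hρ2s a1⟩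
      · intro τ hτ
        obtain ⟨a1, a2⟩ := (hStabMem τ).1 hτ
        exact (hSwpMem _).2 ⟨image_trans_eq τ ρ _ _ _ hρ1 a2,
          image_trans_eq τ ρ _ _ _ hρ2 a1⟩
      · intro σ _; ext a; simp
      · intro τ _; ext a; simp
      · intro σ _
        congr 1
        rw [← hρπ]; ext a; simp
    simp only [hmu]
    rw [e1, e2]
    ring

end Mu

section Final
open Finset
variable {A : Type*} [Fintype A] [DecidableEq A] {k : ℕ} (f : DecisionRule A k ℕ)

lemma int_sign_eq (a b : ℤ) (ha : a = -1 ∨ a = 0 ∨ a = 1) (hb : b = -1 ∨ b = 0 ∨ b = 1)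
    (h1 : 0 ≤ a ↔ 0 ≤ b) (h2 : a = 0 ↔ b = 0) : a = b := by
  rcases ha with h | h | h <;> rcases hb with h' | h' | h' <;> subst h <;> subst h' <;>
    simp_all <;> omega

lemma exists_dt (hN : f.Neutral) (hC : f.Consistent) (hCont : f.IsContinuous) (t : ℕ) :
    ∃ dt : Finset (Fin (Fintype.card A)) → Finset (Fin (Fintype.card A)) → ℝ,
      (∀ I J, I.card = k → J.card = k → (I ∩ J).card = t → dt I J = - dt J I) ∧
      ∀ (C1 C2 : Committee A k) (P : Vote A → ℕ), (C1.1 ∩ C2.1).card = t →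
        ((0 < ∑ π : Vote A, (P π : ℝ) * dt (π.pos C1.1) (π.pos C2.1) ↔ f.F P C1 C2 = 1) ∧
         ((∑ π : Vote A, (P π : ℝ) * dt (π.pos C1.1) (π.pos C2.1)) = 0 ↔
            f.F P C1 C2 = 0)) := by
  classical
  by_cases hex : ∃ B1 B2 : Committee A k, (B1.1 ∩ B2.1).card = t
  case neg =>
    refine ⟨fun _ _ => 0, fun I J _ _ _ => by ring, fun C1 C2 P hCt => ?_⟩
    exact absurd ⟨C1, C2, hCt⟩ hex
  case pos =>
  obtain ⟨B1, B2, hB⟩ := hex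
  obtain ⟨mu, hmu_sign, hmu_class, hmu_anti⟩ := exists_mu f hN hC hCont B1 B2
  set dt : Finset (Fin (Fintype.card A)) → Finset (Fin (Fintype.card A)) → ℝ :=
    fun I J => if h : I.card = k ∧ J.card = k ∧ (I ∩ J).card = t then
      mu (Classical.choose (realize_vote B1 B2 I J h.1 h.2.1 (hB.trans h.2.2.symm)))
    else 0 with hdt
  have hdt_spec : ∀ I J (h1 : I.card = k) (h2 : J.card = k) (h3 : (I ∩ J).card = t),
      ∀ π : Vote A, π.pos B1.1 = I → π.pos B2.1 = J → dt I J = mu π := by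
    intro I J h1 h2 h3 π hπ1 hπ2
    simp only [hdt]
    rw [dif_pos (⟨h1, h2, h3⟩ : I.card = k ∧ J.card = k ∧ (I ∩ J).card = t)]
    obtain ⟨c1, c2⟩ := Classical.choose_spec (realize_vote B1 B2 I J h1 h2 (hB.trans h3.symm))
    exact hmu_class π _ (hπ1.trans c1.symm) (hπ2.trans c2.symm)
  refine ⟨dt, ?_, ?_⟩
  · -- antisymmetry
    intro I J hI hJ hIJ
    obtain ⟨π0, hπ01, hπ02⟩ := realize_vote B1 B2 I J hI hJ (hB.trans hIJ.symm)
    obtain ⟨π1, hπ11, hπ12⟩ := realize_vote B1 B2 J I hJ hI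
      (hB.trans (by rw [Finset.inter_comm]; exact hIJ.symm))
    have e0 : dt I J = mu π0 := hdt_spec I J hI hJ hIJ π0 hπ01 hπ02
    have e1 : dt J I = mu π1 := hdt_spec J I hJ hI (by rw [Finset.inter_comm]; exact hIJ) π1 hπ11 hπ12
    have := hmu_anti π0 π1 (hπ11.trans hπ02.symm) (hπ12.trans hπ01.symm)
    rw [e0, e1]
    linarith
  · -- score property
    intro C1 C2 P hCt
    obtain ⟨σ, hσ1, hσ2⟩ := pair_transport B1 B2 C1 C2 (hB.trans hCt.symm)
    set P0 : Vote A → ℕ := permSitu σ.symm P with hP0def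
    have hP0 : permSitu σ P0 = P := by
      funext π
      show P (σ.symm.trans (σ.trans π)) = P π
      rw [equiv_trans_cancel]
    have hFeq : f.F P0 B1 B2 = f.F P C1 C2 := by
      have h := hN σ P0 B1 B2
      rw [permComm_eq σ B1 C1 hσ1, permComm_eq σ B2 C2 hσ2, hP0] at h
      exact h.symm
    have hsum : ∑ π : Vote A, (P π : ℝ) * dt (π.pos C1.1) (π.pos C2.1)
        = ∑ π : Vote A, (P0 π : ℝ) * mu π := by
      have hre := vote_reindex σ.symm (fun ρ => (P ρ : ℝ) * mu (σ.trans ρ))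
      have step1 : ∑ π : Vote A, (P0 π : ℝ) * mu π
          = ∑ ρ : Vote A, (P ρ : ℝ) * mu (σ.trans ρ) := by
        rw [← hre]
        apply Finset.sum_congr rfl
        intro π _
        have hc : σ.trans (σ.symm.trans π) = π := by
          have := equiv_trans_cancel σ.symm π
          rwa [Equiv.symm_symm] at this
        rw [hc]
        rfl
      rw [step1]
      apply Finset.sum_congr rfl
      intro ρ _
      congr 1
      have hI : Vote.pos (σ.trans ρ) B1.1 = ρ.pos C1.1 :=
        image_trans_eq ρ σ B1.1 C1.1 _ hσ1 rfl
      have hJ : Vote.pos (σ.trans ρ) B2.1 = ρ.pos C2.1 :=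
        image_trans_eq ρ σ B2.1 C2.1 _ hσ2 rfl
      have hcard1 : (ρ.pos C1.1).card = k := by
        rw [show ρ.pos C1.1 = C1.1.image ρ from rfl,
          Finset.card_image_of_injective _ (Equiv.injective ρ), C1.2]
      have hcard2 : (ρ.pos C2.1).card = k := by
        rw [show ρ.pos C2.1 = C2.1.image ρ from rfl,
          Finset.card_image_of_injective _ (Equiv.injective ρ), C2.2]
      have hcard3 : ((ρ.pos C1.1) ∩ (ρ.pos C2.1)).card = t := by
        rw [show ρ.pos C1.1 = C1.1.image ρ from rfl, show ρ.pos C2.1 = C2.1.image ρ from rfl,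
          ← Finset.image_inter _ _ (Equiv.injective ρ),
          Finset.card_image_of_injective _ (Equiv.injective ρ)]
        exact hCt
      exact hdt_spec _ _ hcard1 hcard2 hcard3 (σ.trans ρ) hI hJ
    rw [hsum]
    have := hmu_sign P0
    rw [hFeq] at this
    exact this

theorem decisionScoringRule_characterization' (hk : k ≤ Fintype.card A)
    (f : DecisionRule A k ℕ) :
    f.IsDecisionScoringRule ↔ f.Neutral ∧ f.Consistent ∧ f.IsContinuous := by
  classical
  constructor
  · -- forward
    rintro ⟨d, hd1, hd2⟩
    refine ⟨?_, ?_, ?_⟩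
    · -- neutral
      intro σ P C1 C2
      have hscore : pairScoreN d (permComm σ C1).1 (permComm σ C2).1 (permSitu σ P)
          = pairScoreN d C1.1 C2.1 P := by
        unfold pairScoreN
        have hre := vote_reindex σ (fun ρ => (P ρ : ℝ) * d (ρ.pos C1.1) (ρ.pos C2.1))
        rw [← hre]
        apply Finset.sum_congr rfl
        intro π _
        have e1 : Vote.pos (σ.trans π) C1.1 = π.pos (permComm σ C1).1 :=
          image_trans_eq π σ C1.1 _ _ rfl rfl
        have e2 : Vote.pos (σ.trans π) C2.1 = π.pos (permComm σ C2).1 :=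
          image_trans_eq π σ C2.1 _ _ rfl rfl
        rw [e1, e2]
        rfl
      have a1 := hd2 (permSitu σ P) (permComm σ C1) (permComm σ C2)
      have a2 := hd2 P C1 C2
      rw [hscore] at a1
      exact int_sign_eq _ _ (f.mem_range _ _ _) (f.mem_range _ _ _)
        (a1.1.trans a2.1.symm) (a1.2.trans a2.2.symm)
    · -- consistent
      intro P Q C1 C2
      have hadd : pairScoreN d C1.1 C2.1 (P + Q)
          = pairScoreN d C1.1 C2.1 P + pairScoreN d C1.1 C2.1 Q := by
        unfold pairScoreN
        rw [← Finset.sum_add_distrib]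
        apply Finset.sum_congr rfl
        intro π _
        show (((P π + Q π : ℕ)) : ℝ) * _ = _
        push_cast
        ring
      have aP := hd2 P C1 C2
      have aQ := hd2 Q C1 C2
      have aPQ := hd2 (P + Q) C1 C2
      constructor
      · intro h1 h2
        have hSP : 0 < pairScoreN d C1.1 C2.1 P := by
          have hle : 0 ≤ pairScoreN d C1.1 C2.1 P := aP.1.1 (by omega)
          rcases eq_or_lt_of_le hle with he | hlt
          · exfalso; have := aP.2.2 he.symm; omega
          · exact hlt
        have hSQ : 0 ≤ pairScoreN d C1.1 C2.1 Q := aQ.1.1 h2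
        have hSPQ : 0 < pairScoreN d C1.1 C2.1 (P + Q) := by rw [hadd]; linarith
        have hge : 0 ≤ f.F (P + Q) C1 C2 := aPQ.1.2 (le_of_lt hSPQ)
        have hne : f.F (P + Q) C1 C2 ≠ 0 := by
          intro h0
          have := aPQ.2.1 h0
          linarith
        have := f.mem_range (P + Q) C1 C2
        omega
      · intro h1 h2
        have hSP : 0 ≤ pairScoreN d C1.1 C2.1 P := aP.1.1 h1
        have hSQ : 0 ≤ pairScoreN d C1.1 C2.1 Q := aQ.1.1 h2
        refine aPQ.1.2 ?_
        rw [hadd]; linarith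
    · -- continuous
      intro P1 P2 C1 C2 h
      have aP2 := hd2 P2 C1 C2
      have hS2 : 0 < pairScoreN d C1.1 C2.1 P2 := by
        have hle : 0 ≤ pairScoreN d C1.1 C2.1 P2 := aP2.1.1 (by omega)
        rcases eq_or_lt_of_le hle with he | hlt
        · exfalso; have := aP2.2.2 he.symm; omega
        · exact hlt
      obtain ⟨n, hn⟩ := exists_nat_gt ((- pairScoreN d C1.1 C2.1 P1) / pairScoreN d C1.1 C2.1 P2)
      refine ⟨n, ?_⟩
      have hsmul : pairScoreN d C1.1 C2.1 (P1 + n • P2)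
          = pairScoreN d C1.1 C2.1 P1 + n * pairScoreN d C1.1 C2.1 P2 := by
        unfold pairScoreN
        rw [Finset.mul_sum, ← Finset.sum_add_distrib]
        apply Finset.sum_congr rfl
        intro π _
        show (((P1 π + n * P2 π : ℕ)) : ℝ) * _ = _
        push_cast
        ring
      have hpos : 0 < pairScoreN d C1.1 C2.1 (P1 + n • P2) := by
        rw [hsmul]
        have := (div_lt_iff₀ hS2).1 hn
        linarith
      have aPQ := hd2 (P1 + n • P2) C1 C2
      have hge : 0 ≤ f.F (P1 + n • P2) C1 C2 := aPQ.1.2 (le_of_lt hpos)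
      have hne : f.F (P1 + n • P2) C1 C2 ≠ 0 := by
        intro h0
        have := aPQ.2.1 h0
        linarith
      have := f.mem_range (P1 + n • P2) C1 C2
      omega
  · -- backward
    rintro ⟨hN, hC, hCont⟩
    choose dt hdt1 hdt2 using (fun t => exists_dt f hN hC hCont t)
    refine ⟨fun I J => dt (I ∩ J).card I J, ?_, ?_⟩
    · intro I J hI hJ
      have hc : (J ∩ I).card = (I ∩ J).card := by rw [Finset.inter_comm]
      show dt (I ∩ J).card I J = - dt (J ∩ I).card J I
      rw [hc]
      exact hdt1 (I ∩ J).card I J hI hJ rfl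
    · intro P C1 C2
      have key := hdt2 (C1.1 ∩ C2.1).card C1 C2 P rfl
      have hps : pairScoreN (fun I J => dt (I ∩ J).card I J) C1.1 C2.1 P
          = ∑ π : Vote A, (P π : ℝ) * dt (C1.1 ∩ C2.1).card (π.pos C1.1) (π.pos C2.1) := by
        unfold pairScoreN
        apply Finset.sum_congr rfl
        intro π _
        have hcard : ((C1.1.image ⇑π) ∩ (C2.1.image ⇑π)).card = (C1.1 ∩ C2.1).card := by
          rw [← Finset.image_inter _ _ (Equiv.injective π),
            Finset.card_image_of_injective _ (Equiv.injective π)]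
        show (P π : ℝ) * dt ((C1.1.image ⇑π) ∩ (C2.1.image ⇑π)).card (C1.1.image ⇑π) (C2.1.image ⇑π)
            = (P π : ℝ) * dt (C1.1 ∩ C2.1).card (π.pos C1.1) (π.pos C2.1)
        rw [hcard]
        rfl
      rw [hps]
      have hr := f.mem_range P C1 C2
      constructor
      · constructor
        · intro h0
          rcases hr with hc | hc | hc
          · omega
          · rw [key.2.2 hc]
          · exact le_of_lt (key.1.2 hc)
        · intro hS
          rcases hr with hc | hc | hc
          · exfalso
            have hne : ∑ π : Vote A, (P π : ℝ) * dt (C1.1 ∩ C2.1).card (π.pos C1.1) (π.pos C2.1) ≠ 0 := by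
              intro h0
              have := key.2.1 h0
              omega
            have hnlt : ¬ (0 < ∑ π : Vote A, (P π : ℝ) * dt (C1.1 ∩ C2.1).card (π.pos C1.1) (π.pos C2.1)) := by
              intro h0
              have := key.1.1 h0
              omega
            rcases lt_trichotomy (0:ℝ) (∑ π : Vote A, (P π : ℝ) * dt (C1.1 ∩ C2.1).card (π.pos C1.1) (π.pos C2.1)) with h | h | h
            · exact hnlt h
            · exact hne h.symm
            · linarith
          · omega
          · omega
      · constructor
        · intro h0
          exact key.2.2 h0
        · intro hS
          exact key.2.1 hS

end Final

end Aux

/-- **Axiomatic characterization of decision scoring rules.**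
A `k`-decision rule is a decision scoring rule if and only if it is neutral, consistent,
and continuous. -/
theorem decisionScoringRule_characterization {A : Type*} [Fintype A] [DecidableEq A]
    {k : ℕ} (hk : k ≤ Fintype.card A) (f : DecisionRule A k ℕ) :
    f.IsDecisionScoringRule ↔ f.Neutral ∧ f.Consistent ∧ f.IsContinuous := by
  exact decisionScoringRule_characterization' hk f
end

section
/- Let f be a neutral and consistent k-decision rule, let C1 and C2 be two size-k committees, let P be a voting situation, let v be a vote occurring in P, and let a, b be two candidates such that one of the following holds: (i) a, b ∉ C1 ∪ C2, (ii) a, b ∈ C1 ∩ C2, (iii) a, b ∈ C1 \ C2, or (iv) a, b ∈ C2 \ C1. Let P[v, a↔b] be the voting situation obtained from P by replacing one copy of the vote v with the vote obtained from v by swapping a and b. Then C1 ⪰_P C2 if and only if C1 ⪰_{P[v, a↔b]} C2. -/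
open Finset

section Aux

variable {A : Type*} [Fintype A] [DecidableEq A] {k : ℕ}

lemma swap_image_eq (a b : A) (C : Finset A)
    (h : (a ∈ C ∧ b ∈ C) ∨ (a ∉ C ∧ b ∉ C)) :
    C.image (Equiv.swap a b) = C := by
  have hmem : ∀ x ∈ C, Equiv.swap a b x ∈ C := by
    intro x hx
    rcases eq_or_ne x a with rfl | hxa
    · rw [Equiv.swap_apply_left]; tauto
    rcases eq_or_ne x b with rfl | hxb
    · rw [Equiv.swap_apply_right]; tauto
    · rw [Equiv.swap_apply_of_ne_of_ne hxa hxb]; exact hx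
  refine Finset.eq_of_subset_of_card_le (Finset.image_subset_iff.mpr hmem) ?_
  rw [Finset.card_image_of_injective _ (Equiv.injective _)]

lemma permComm_eq_of_fixed (σ : Equiv.Perm A) (C : Committee A k)
    (h : C.1.image σ = C.1) : permComm σ C = C := Subtype.ext h

lemma key_step (f : DecisionRule A k ℕ) (hneu : f.Neutral) (hcons : f.Consistent)
    (C1 C2 : Committee A k) (σ : Equiv.Perm A)
    (hC1 : permComm σ C1 = C1) (hC2 : permComm σ C2 = C2)
    (P Q : Vote A → ℕ) (hPQ : P + permSitu σ P = Q + permSitu σ Q)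
    (hP : 0 ≤ f.F P C1 C2) : 0 ≤ f.F Q C1 C2 := by
  by_contra hQ
  have hQ' : f.F Q C1 C2 = -1 := by
    rcases f.mem_range Q C1 C2 with h | h | h <;> omega
  have hQ2 : f.F Q C2 C1 = 1 := by
    have := f.antisymm Q C1 C2; omega
  have hQσ : f.F (permSitu σ Q) C2 C1 = 1 := by
    have := hneu σ Q C2 C1; rw [hC1, hC2] at this; omega
  have hsum1 : f.F (Q + permSitu σ Q) C2 C1 = 1 :=
    (hcons Q (permSitu σ Q) C2 C1).1 hQ2 (by omega)
  have hPσ : 0 ≤ f.F (permSitu σ P) C1 C2 := by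
    have := hneu σ P C1 C2; rw [hC1, hC2] at this; omega
  have hsum2 : 0 ≤ f.F (P + permSitu σ P) C1 C2 :=
    (hcons P (permSitu σ P) C1 C2).2 hP hPσ
  rw [hPQ] at hsum2
  have := f.antisymm (Q + permSitu σ Q) C1 C2
  omega

end Aux

/-- **Irrelevance of swaps (Lemma 1).**
Let `f` be a neutral and consistent `k`-decision rule, `C1, C2` two size-`k` committees,
`P` a voting situation, `v` a vote occurring in `P`, and `a, b` two candidates that both lie
outside `C1 ∪ C2`, or both in `C1 ∩ C2`, or both in `C1 \ C2`, or both in `C2 \ C1`.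
Then `C1 ⪰ C2` at `P` iff `C1 ⪰ C2` at the situation obtained from `P` by swapping
`a` and `b` in one copy of the vote `v`. -/
theorem swap_irrelevant {A : Type*} [Fintype A] [DecidableEq A] {k : ℕ}
    (f : DecisionRule A k ℕ) (hneu : f.Neutral) (hcons : f.Consistent)
    (C1 C2 : Committee A k) (P : Vote A → ℕ) (v : Vote A) (hv : 1 ≤ P v) (a b : A)
    (hab : (a ∉ C1.1 ∪ C2.1 ∧ b ∉ C1.1 ∪ C2.1) ∨
           (a ∈ C1.1 ∩ C2.1 ∧ b ∈ C1.1 ∩ C2.1) ∨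
           (a ∈ C1.1 \ C2.1 ∧ b ∈ C1.1 \ C2.1) ∨
           (a ∈ C2.1 \ C1.1 ∧ b ∈ C2.1 \ C1.1)) :
    0 ≤ f.F P C1 C2 ↔
      0 ≤ f.F (fun u => P u - (if u = v then 1 else 0)
                + (if u = permVote (Equiv.swap a b) v then 1 else 0)) C1 C2 := by
  set σ := Equiv.swap a b with hσ
  set Q : Vote A → ℕ := fun u => P u - (if u = v then 1 else 0)
                + (if u = permVote σ v then 1 else 0) with hQdef
  have hC1 : permComm σ C1 = C1 := by
    refine permComm_eq_of_fixed σ C1 (swap_image_eq a b C1.1 ?_)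
    rcases hab with ⟨h1, h2⟩ | ⟨h1, h2⟩ | ⟨h1, h2⟩ | ⟨h1, h2⟩ <;>
      simp only [Finset.mem_union, Finset.mem_inter, Finset.mem_sdiff] at h1 h2 <;> tauto
  have hC2 : permComm σ C2 = C2 := by
    refine permComm_eq_of_fixed σ C2 (swap_image_eq a b C2.1 ?_)
    rcases hab with ⟨h1, h2⟩ | ⟨h1, h2⟩ | ⟨h1, h2⟩ | ⟨h1, h2⟩ <;>
      simp only [Finset.mem_union, Finset.mem_inter, Finset.mem_sdiff] at h1 h2 <;> tauto
  have hσσ : σ.symm = σ := Equiv.symm_swap a b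
  have hσ2 : Equiv.trans σ σ = Equiv.refl A := Equiv.swap_swap a b
  have hcancel : ∀ u : Vote A, Equiv.trans σ (Equiv.trans σ u) = u := by
    intro u; rw [← Equiv.trans_assoc, hσ2, Equiv.refl_trans]
  have hw : permVote σ v = Equiv.trans σ v := by rw [permVote, hσσ]
  have hPQ : P + permSitu σ P = Q + permSitu σ Q := by
    funext π
    simp only [Pi.add_apply, permSitu, hQdef, hw]
    rcases eq_or_ne π v with rfl | hπv
    · rcases eq_or_ne (Equiv.trans σ π) π with heq | hne
      · rw [heq]; simp only [eq_self_iff_true, if_true]; omega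
      · simp only [eq_self_iff_true, if_true, if_neg hne,
          if_neg (fun h : π = Equiv.trans σ π => hne h.symm)]
        omega
    · rcases eq_or_ne π (Equiv.trans σ v) with rfl | hπw
      · rw [hcancel v]
        simp only [eq_self_iff_true, if_true, if_neg hπv,
          if_neg (fun h : v = Equiv.trans σ v => hπv h.symm)]
        omega
      · have h3 : Equiv.trans σ π ≠ v := fun h => hπw (by rw [← hcancel π, h])
        have h4 : Equiv.trans σ π ≠ Equiv.trans σ v := fun h => hπv (by
          rw [← hcancel π, h, hcancel])
        simp only [if_neg hπv, if_neg hπw, if_neg h3, if_neg h4]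
        omega
  constructor
  · exact key_step f hneu hcons C1 C2 σ hC1 hC2 P Q hPQ
  · exact key_step f hneu hcons C1 C2 σ hC1 hC2 Q P hPQ.symm
end

section
/- In the Δ-setup, let I1 and I2 be committee positions with |I1 ∩ I2| = s and let x, y be positive integers. Then: (1) if C1 ≻ C2 at v(C1→I1,C2→I2) and y/x < Δ_{I1,I2}, then C2 ≻ C1 at the voting situation x·v(C1→I2,C2→I1) + y·v(C1→I1*,C2→I2*); and (2) if C2 ≻ C1 at v(C1→I1,C2→I2) and y/x > −Δ_{I1,I2}, then C2 ≻ C1 at the voting situation x·v(C1→I2,C2→I1) + y·v(C1→I2*,C2→I1*). -/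
open Finset

/-- The voting situation consisting of a single copy of the vote `π`. -/
def singleSitu {A : Type*} [Fintype A] [DecidableEq A] (π : Vote A) : Vote A → ℕ :=
  fun u => if u = π then 1 else 0

/-- The value `Δ_{I1,I2}` of the Δ-setup, relative to a rule `f`, committees `C1, C2`,
a family `w` of distinguished votes (where `w J1 J2` places `C1` on positions `J1` and
`C2` on positions `J2`), and the reference positions `I1s, I2s`. -/
noncomputable def Delta {A : Type*} [Fintype A] [DecidableEq A] {k : ℕ}
    (f : DecisionRule A k ℕ) (C1 C2 : Committee A k)
    (w : Finset (Fin (Fintype.card A)) → Finset (Fin (Fintype.card A)) → Vote A)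
    (I1s I2s : Finset (Fin (Fintype.card A)))
    (I1 I2 : Finset (Fin (Fintype.card A))) : ℝ :=
  if f.F (singleSitu (w I1 I2)) C1 C2 = 1 then
    sSup {q : ℝ | ∃ x y : ℕ, 0 < x ∧ 0 < y ∧ q = (y : ℝ) / (x : ℝ) ∧
      f.F (x • singleSitu (w I2 I1) + y • singleSitu (w I1s I2s)) C2 C1 = 1}
  else if f.F (singleSitu (w I1 I2)) C1 C2 = -1 then
    - sInf {q : ℝ | ∃ x y : ℕ, 0 < x ∧ 0 < y ∧ q = (y : ℝ) / (x : ℝ) ∧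
      f.F (x • singleSitu (w I2 I1) + y • singleSitu (w I2s I1s)) C2 C1 = 1}
  else 0

section Helpers

variable {A : Type*} [Fintype A] [DecidableEq A] {k : ℕ}

lemma scale_pos {f : DecisionRule A k ℕ} (hcons : f.Consistent)
    {P : Vote A → ℕ} {C D : Committee A k} (h : f.F P C D = 1) :
    ∀ n : ℕ, 0 < n → f.F (n • P) C D = 1 := by
  intro n hn
  induction n with
  | zero => omega
  | succ m ih =>
    rcases Nat.eq_zero_or_pos m with hm | hm
    · subst hm; simpa using h
    · rw [succ_nsmul']
      exact (hcons P (m • P) C D).1 h (by rw [ih hm]; norm_num)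

lemma scale_nonneg {f : DecisionRule A k ℕ} (hcons : f.Consistent)
    {P : Vote A → ℕ} {C D : Committee A k} (h : 0 ≤ f.F P C D) :
    ∀ n : ℕ, 0 < n → 0 ≤ f.F (n • P) C D := by
  intro n hn
  induction n with
  | zero => omega
  | succ m ih =>
    rcases Nat.eq_zero_or_pos m with hm | hm
    · subst hm; simpa using h
    · rw [succ_nsmul']
      exact (hcons P (m • P) C D).2 h (ih hm)

lemma nonneg_of_ne_one {f : DecisionRule A k ℕ}
    {P : Vote A → ℕ} {C D : Committee A k} (h : f.F P C D ≠ 1) :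
    0 ≤ f.F P D C := by
  have := f.antisymm P D C
  rcases f.mem_range P C D with h' | h' | h' <;> omega

lemma down_scale {f : DecisionRule A k ℕ} (hcons : f.Consistent)
    {P : Vote A → ℕ} {C D : Committee A k} {n : ℕ} (hn : 0 < n)
    (h : f.F (n • P) C D = 1) : f.F P C D = 1 := by
  by_contra h'
  have h0 : 0 ≤ f.F (n • P) D C := scale_nonneg hcons (nonneg_of_ne_one h') n hn
  have := f.antisymm (n • P) D C
  omega

lemma step1 {f : DecisionRule A k ℕ} (hcons : f.Consistent)
    {u v : Vote A → ℕ} {C1 C2 : Committee A k} {x y x' y' : ℕ}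
    (hx : 0 < x) (hx' : 0 < x')
    (hv : f.F v C1 C2 = 1) (h' : f.F (x' • u + y' • v) C2 C1 = 1)
    (hd : x' * y < x * y') : f.F (x • u + y • v) C2 C1 = 1 := by
  by_contra hcon
  have h0 : 0 ≤ f.F (x • u + y • v) C1 C2 := nonneg_of_ne_one (by
    intro hh; have := f.antisymm (x • u + y • v) C1 C2; omega)
  have h0' : 0 ≤ f.F (x' • (x • u + y • v)) C1 C2 := scale_nonneg hcons h0 x' hx'
  have hd1 : f.F ((x * y' - x' * y) • v) C1 C2 = 1 :=
    scale_pos hcons hv _ (by omega)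
  have hsum : f.F ((x * y' - x' * y) • v + x' • (x • u + y • v)) C1 C2 = 1 :=
    (hcons _ _ _ _).1 hd1 h0'
  have heq : (x * y' - x' * y) • v + x' • (x • u + y • v) = x • (x' • u + y' • v) := by
    rw [smul_add, smul_add, smul_smul, smul_smul, smul_smul, smul_smul,
      add_left_comm, ← add_smul]
    have h1 : x * y' - x' * y + x' * y = x * y' := by omega
    rw [h1, Nat.mul_comm x' x]
  rw [heq] at hsum
  have hsc : f.F (x • (x' • u + y' • v)) C2 C1 = 1 := scale_pos hcons h' x hx
  have := f.antisymm (x • (x' • u + y' • v)) C2 C1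
  omega

lemma step2 {f : DecisionRule A k ℕ} (hcons : f.Consistent)
    {u v : Vote A → ℕ} {C1 C2 : Committee A k} {x y x' y' : ℕ}
    (hx : 0 < x) (hx' : 0 < x')
    (hv : f.F v C2 C1 = 1) (h' : f.F (x' • u + y' • v) C2 C1 = 1)
    (hd : x * y' < x' * y) : f.F (x • u + y • v) C2 C1 = 1 := by
  have h1 : f.F (x • (x' • u + y' • v)) C2 C1 = 1 := scale_pos hcons h' x hx
  have h2 : f.F ((x' * y - x * y') • v) C2 C1 = 1 :=
    scale_pos hcons hv _ (by omega)
  have hsum : f.F (x • (x' • u + y' • v) + (x' * y - x * y') • v) C2 C1 = 1 :=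
    (hcons _ _ _ _).1 h1 (by rw [h2]; norm_num)
  have heq : x • (x' • u + y' • v) + (x' * y - x * y') • v = x' • (x • u + y • v) := by
    rw [smul_add, smul_add, smul_smul, smul_smul, smul_smul, smul_smul,
      add_assoc, ← add_smul]
    have h1 : x * y' + (x' * y - x * y') = x' * y := by omega
    rw [h1, Nat.mul_comm x x']
  rw [heq] at hsum
  exact down_scale hcons hx' hsum

end Helpers

/-- **Lemma 3.** In the Δ-setup, `Δ_{I1,I2}` is a threshold value: (1) if `C1 ≻ C2` at
`v(C1→I1,C2→I2)` and `y/x < Δ_{I1,I2}`, then `C2 ≻ C1` at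
`x·v(C1→I2,C2→I1) + y·v(C1→I1*,C2→I2*)`; and (2) if `C2 ≻ C1` at `v(C1→I1,C2→I2)` and
`y/x > -Δ_{I1,I2}`, then `C2 ≻ C1` at `x·v(C1→I2,C2→I1) + y·v(C1→I2*,C2→I1*)`. -/
theorem delta_threshold {A : Type*} [Fintype A] [DecidableEq A] {k s : ℕ}
    (hk : k ≤ Fintype.card A) (hs : s < k)
    (f : DecisionRule A k ℕ) (hneu : f.Neutral) (hcons : f.Consistent) (hcont : f.IsContinuous)
    (C1 C2 : Committee A k) (hC : (C1.1 ∩ C2.1).card = s)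
    (w : Finset (Fin (Fintype.card A)) → Finset (Fin (Fintype.card A)) → Vote A)
    (hw : ∀ J1 J2 : Finset (Fin (Fintype.card A)), J1.card = k → J2.card = k →
      (J1 ∩ J2).card = s → (w J1 J2).pos C1.1 = J1 ∧ (w J1 J2).pos C2.1 = J2)
    (I1s I2s : Finset (Fin (Fintype.card A)))
    (hI1s : I1s.card = k) (hI2s : I2s.card = k) (hIs : (I1s ∩ I2s).card = s)
    (hstar : f.F (singleSitu (w I1s I2s)) C1 C2 = 1)
    (I1 I2 : Finset (Fin (Fintype.card A)))
    (hI1 : I1.card = k) (hI2 : I2.card = k) (hI : (I1 ∩ I2).card = s)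
    (x y : ℕ) (hx : 0 < x) (hy : 0 < y) :
    (f.F (singleSitu (w I1 I2)) C1 C2 = 1 →
      (y : ℝ) / (x : ℝ) < Delta f C1 C2 w I1s I2s I1 I2 →
      f.F (x • singleSitu (w I2 I1) + y • singleSitu (w I1s I2s)) C2 C1 = 1) ∧
    (f.F (singleSitu (w I1 I2)) C2 C1 = 1 →
      - Delta f C1 C2 w I1s I2s I1 I2 < (y : ℝ) / (x : ℝ) →
      f.F (x • singleSitu (w I2 I1) + y • singleSitu (w I2s I1s)) C2 C1 = 1) := by
  have hx0 : (0:ℝ) < (x:ℝ) := by exact_mod_cast hx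
  have hy0 : (0:ℝ) < (y:ℝ) / (x:ℝ) := by positivity
  constructor
  · -- Part (1)
    intro h1 hlt
    simp only [Delta, if_pos h1] at hlt
    set S := {q : ℝ | ∃ x' y' : ℕ, 0 < x' ∧ 0 < y' ∧ q = (y' : ℝ) / (x' : ℝ) ∧
      f.F (x' • singleSitu (w I2 I1) + y' • singleSitu (w I1s I2s)) C2 C1 = 1} with hS
    have hSne : S.Nonempty := by
      by_contra hne
      rw [Set.not_nonempty_iff_eq_empty] at hne
      rw [hne, Real.sSup_empty] at hlt
      linarith
    obtain ⟨q, hqS, hq⟩ := exists_lt_of_lt_csSup hSne hlt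
    obtain ⟨x', y', hx', hy', rfl, hF⟩ := hqS
    have hx'0 : (0:ℝ) < (x':ℝ) := by exact_mod_cast hx'
    have hcast : (y:ℝ) * x' < (y':ℝ) * x := (div_lt_div_iff₀ hx0 hx'0).mp hq
    have hnat : y * x' < y' * x := by exact_mod_cast hcast
    exact step1 hcons hx hx' hstar hF (by
      rw [Nat.mul_comm x' y, Nat.mul_comm x y']; exact hnat)
  · -- Part (2)
    intro h2 hlt
    have h1' : f.F (singleSitu (w I1 I2)) C1 C2 = -1 := by
      have := f.antisymm (singleSitu (w I1 I2)) C1 C2; omega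
    have hne1 : ¬ f.F (singleSitu (w I1 I2)) C1 C2 = 1 := by omega
    simp only [Delta, if_neg hne1, if_pos h1', neg_neg] at hlt
    -- Neutrality: `C2 ≻ C1` at the swapped reference vote
    obtain ⟨hp01, hp02⟩ := hw I1s I2s hI1s hI2s hIs
    obtain ⟨hp11, hp12⟩ := hw I2s I1s hI2s hI1s (by rwa [Finset.inter_comm])
    set π0 : Vote A := w I1s I2s with hπ0
    set π1 : Vote A := w I2s I1s with hπ1
    set σ : Equiv.Perm A := π0.trans π1.symm with hσ
    have key : ∀ π : Vote A, σ.trans π = π0 ↔ π = π1 := by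
      intro π
      constructor
      · intro h
        have h' := Equiv.ext_iff.mp h
        apply Equiv.ext
        intro a
        have := h' (σ.symm a)
        simp only [Equiv.trans_apply, Equiv.apply_symm_apply, hσ,
          Equiv.symm_trans_apply, Equiv.symm_symm, Equiv.symm_apply_apply,
          Equiv.apply_symm_apply] at this ⊢
        rw [this]
      · rintro rfl
        apply Equiv.ext
        intro a
        simp [hσ, Equiv.trans_apply]
    have hps : permSitu σ (singleSitu π0) = singleSitu π1 := by
      funext π
      simp only [permSitu, singleSitu]
      exact if_congr (key π) rfl rfl
    have hperm1 : permComm σ C1 = C2 := by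
      apply Subtype.ext
      show C1.1.image σ = C2.1
      have e1 : C1.1.image σ = (C1.1.image π0).image π1.symm := by
        rw [Finset.image_image]; rfl
      have e2 : (C2.1.image π1).image π1.symm = C2.1 := by
        rw [Finset.image_image]
        simp
      rw [e1]
      rw [show C1.1.image π0 = I1s from hp01, show I1s = C2.1.image π1 from hp12.symm]
      exact e2
    have hperm2 : permComm σ C2 = C1 := by
      apply Subtype.ext
      show C2.1.image σ = C1.1
      have e1 : C2.1.image σ = (C2.1.image π0).image π1.symm := by
        rw [Finset.image_image]; rfl
      have e2 : (C1.1.image π1).image π1.symm = C1.1 := by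
        rw [Finset.image_image]
        simp
      rw [e1]
      rw [show C2.1.image π0 = I2s from hp02, show I2s = C1.1.image π1 from hp11.symm]
      exact e2
    have hv2 : f.F (singleSitu π1) C2 C1 = 1 := by
      have hn := hneu σ (singleSitu π0) C1 C2
      rw [hps, hperm1, hperm2] at hn
      exact hn.trans hstar
    -- Nonemptiness of the infimum set
    obtain ⟨n, hn⟩ := hcont (singleSitu (w I2 I1)) (singleSitu π1) C2 C1 hv2
    have hn' : f.F (singleSitu (w I2 I1) + (n + 1) • singleSitu π1) C2 C1 = 1 := by
      rw [succ_nsmul, ← add_assoc]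
      exact (hcons _ _ _ _).1 hn (by rw [hv2]; norm_num)
    set T := {q : ℝ | ∃ x' y' : ℕ, 0 < x' ∧ 0 < y' ∧ q = (y' : ℝ) / (x' : ℝ) ∧
      f.F (x' • singleSitu (w I2 I1) + y' • singleSitu (w I2s I1s)) C2 C1 = 1} with hT
    have hTne : T.Nonempty := by
      refine ⟨((n + 1 : ℕ) : ℝ) / ((1 : ℕ) : ℝ), 1, n + 1, one_pos, n.succ_pos, rfl, ?_⟩
      simpa [one_smul] using hn'
    obtain ⟨q, hqT, hq⟩ := exists_lt_of_csInf_lt hTne hlt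
    obtain ⟨x', y', hx', hy', rfl, hF⟩ := hqT
    have hx'0 : (0:ℝ) < (x':ℝ) := by exact_mod_cast hx'
    have hcast : (y':ℝ) * x < (y:ℝ) * x' := (div_lt_div_iff₀ hx'0 hx0).mp hq
    have hnat : y' * x < y * x' := by exact_mod_cast hcast
    exact step2 hcons hx hx' hv2 hF (by
      rw [Nat.mul_comm x y', Nat.mul_comm x' y]; exact hnat)
end

section
/- Let p and j be integers with 1 ≤ j ≤ p. The Johnson graph G(j,p), whose vertices are the j-element subsets of {1,…,p} and in which two vertices are adjacent exactly when the corresponding subsets have j−1 elements in common, contains a Hamiltonian path (a path visiting each vertex exactly once) that starts at the set {1,…,j} and ends at the set {p−j+1,…,p}. -/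
/-- The Johnson graph `G(j,p)`: vertices are the `j`-element subsets of `{1,…,p}`
(modelled as `Fin p`, with `i : Fin p` standing for the number `i+1`), and two
distinct subsets are adjacent exactly when their intersection has `j-1` elements. -/
def johnsonGraph (p j : ℕ) : SimpleGraph {S : Finset (Fin p) // S.card = j} where
  Adj S T := S ≠ T ∧ (S.1 ∩ T.1).card = j - 1
  symm := by
    constructor
    intro S T h
    exact ⟨h.1.symm, by rw [Finset.inter_comm]; exact h.2⟩
  loopless := by
    constructor
    intro S h
    exact h.1 rfl

namespace JGProof

/-- Adjacency on `Finset ℕ` at level `j`. -/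
def R (j : ℕ) (S T : Finset ℕ) : Prop := S ≠ T ∧ (S ∩ T).card = j - 1

lemma R.symm {j} {S T : Finset ℕ} (h : R j S T) : R j T S :=
  ⟨h.1.symm, by rw [Finset.inter_comm]; exact h.2⟩

/-- Revolving-door Gray-code list of the `j`-subsets of `{0,…,p-1}`, going from
`{0,…,j-1}` to `{p-j,…,p-1}`. -/
def JL (p j : ℕ) : List (Finset ℕ) :=
  if h0 : j = 0 then [∅]
  else if h1 : p ≤ j then [Finset.range p]
  else if h2 : j = 1 then JL (p-1) 1 ++ [{p-1}]
  else JL (p-1) j ++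
    (((JL (p-2) (j-1)).reverse ++ (JL (p-2) (j-2)).map (insert (p-2))).map (insert (p-1)))
termination_by p
decreasing_by all_goals omega

/-- Specification of a Hamiltonian chain on the `k`-subsets of `{0,…,m-1}`
from `a` to `b`. -/
structure Spec (m k : ℕ) (a b : Finset ℕ) (l : List (Finset ℕ)) : Prop where
  mem_iff : ∀ S : Finset ℕ, S ∈ l ↔ S ⊆ Finset.range m ∧ S.card = k
  nodup : l.Nodup
  chain : l.Chain' (R k)
  hd : l.head? = some a
  lst : l.getLast? = some b

lemma Spec.ne_nil {m k a b l} (h : Spec m k a b l) : l ≠ [] := by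
  intro hl
  have := h.hd
  rw [hl] at this
  simp at this

lemma Spec.reverse {m k a b l} (h : Spec m k a b l) : Spec m k b a l.reverse where
  mem_iff S := by rw [List.mem_reverse]; exact h.mem_iff S
  nodup := List.nodup_reverse.mpr h.nodup
  chain := by
    unfold List.Chain'
    rw [List.isChain_reverse]
    exact (show List.IsChain _ l from h.chain).imp (fun _ _ hr => hr.symm)
  hd := by rw [List.head?_reverse]; exact h.lst
  lst := by rw [List.getLast?_reverse]; exact h.hd

lemma Spec.cast {m k : ℕ} {a b : Finset ℕ} {l} (h : Spec m k a b l) {m' k' : ℕ} {a' b' : Finset ℕ}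
    (hm : m = m') (hk : k = k') (ha : a = a') (hb : b = b') : Spec m' k' a' b' l := by
  subst hm hk ha hb; exact h

/-- adjacency is preserved by inserting a fresh element on both sides -/
lemma R_insert {k a : ℕ} {S T : Finset ℕ} (hS : a ∉ S) (hT : a ∉ T)
    (hcS : S.card = k) (hcT : T.card = k) (h : R k S T) : R (k+1) (insert a S) (insert a T) := by
  have hk : 1 ≤ k := by
    by_contra hk0
    exact h.1 ((Finset.card_eq_zero.mp (hcS.trans (by omega))).trans
      (Finset.card_eq_zero.mp (hcT.trans (by omega))).symm)
  constructor
  · intro he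
    apply h.1
    rw [← Finset.erase_insert hS, ← Finset.erase_insert hT, he]
  · have hint : insert a S ∩ insert a T = insert a (S ∩ T) := by
      ext x; simp [Finset.mem_insert, Finset.mem_inter]; tauto
    rw [hint, Finset.card_insert_of_notMem (by simp [hS, hT]), h.2]
    omega

lemma chain_map_insert {k a : ℕ} {l : List (Finset ℕ)}
    (hmem : ∀ S ∈ l, a ∉ S ∧ S.card = k) (hc : l.Chain' (R k)) :
    (l.map (insert a)).Chain' (R (k+1)) := by
  induction l with
  | nil => simp [List.Chain']
  | cons S t ih =>
    cases t with
    | nil => simp [List.Chain']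
    | cons T t' =>
      obtain ⟨hST, hc'⟩ := List.isChain_cons_cons.mp hc
      rw [List.map_cons, List.map_cons]
      unfold List.Chain'
      rw [List.isChain_cons_cons]
      have hSm := hmem S (by simp)
      have hTm := hmem T (by simp)
      refine ⟨R_insert hSm.1 hTm.1 hSm.2 hTm.2 hST, ?_⟩
      rw [← List.map_cons]
      exact ih (fun x hx => hmem x (by simp [List.mem_cons] at hx ⊢; tauto)) hc'

/-- Gluing step: a spec'd list over `{0,…,m-1}` of `(k'+1)`-sets, followed by a spec'd list of
`k'`-sets over `{0,…,m-1}` each augmented with `m`, forms a spec'd list over `{0,…,m}`. -/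
lemma spec_step {m k' : ℕ} {a b c d : Finset ℕ} {l1 l2 : List (Finset ℕ)}
    (h1 : Spec m (k'+1) a b l1) (h2 : Spec m k' c d l2)
    (hjunc : R (k'+1) b (insert m c)) :
    Spec (m+1) (k'+1) a (insert m d) (l1 ++ l2.map (insert m)) := by
  have hk : 1 ≤ k' + 1 := by omega
  set k := k' + 1 with hkdef
  have hk' : k - 1 = k' := by omega
  refine {
    mem_iff := ?_, nodup := ?_, chain := ?_, hd := ?_, lst := ?_ }
  · intro S
    constructor
    · intro hS
      rcases List.mem_append.mp hS with h | h
      · obtain ⟨hsub, hcard⟩ := (h1.mem_iff S).mp h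
        exact ⟨hsub.trans (by intro x hx; simp [Finset.mem_range] at hx ⊢; omega), hcard⟩
      · obtain ⟨S', hS', rfl⟩ := List.mem_map.mp h
        obtain ⟨hsub, hcard⟩ := (h2.mem_iff S').mp hS'
        have hm : m ∉ S' := fun hmem => by
          have := hsub hmem; simp [Finset.mem_range] at this
        constructor
        · intro x hx
          rcases Finset.mem_insert.mp hx with rfl | hx
          · simp [Finset.mem_range]
          · have := hsub hx; simp [Finset.mem_range] at this ⊢; omega
        · rw [Finset.card_insert_of_notMem hm, hcard]
    · rintro ⟨hsub, hcard⟩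
      rcases Decidable.em (m ∈ S) with hm | hm
      · refine List.mem_append.mpr (Or.inr (List.mem_map.mpr ⟨S.erase m, ?_, ?_⟩))
        · refine (h2.mem_iff _).mpr ⟨?_, ?_⟩
          · intro x hx
            obtain ⟨hxm, hxS⟩ := Finset.mem_erase.mp hx
            have := hsub hxS; simp [Finset.mem_range] at this ⊢; omega
          · rw [Finset.card_erase_of_mem hm, hcard]
            omega
        · exact Finset.insert_erase hm
      · refine List.mem_append.mpr (Or.inl ((h1.mem_iff S).mpr ⟨?_, hcard⟩))
        intro x hx
        have := hsub hx
        simp [Finset.mem_range] at this ⊢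
        rcases Nat.lt_or_eq_of_le this with h | rfl
        · exact h
        · exact absurd hx hm
  · have hnotm1 : ∀ S ∈ l1, m ∉ S := fun S hS hm => by
      have := ((h1.mem_iff S).mp hS).1 hm
      simp [Finset.mem_range] at this
    have hnotm2 : ∀ S ∈ l2, m ∉ S := fun S hS hm => by
      have := ((h2.mem_iff S).mp hS).1 hm
      simp [Finset.mem_range] at this
    refine List.Nodup.append h1.nodup ?_ ?_
    · refine List.Nodup.map_on ?_ h2.nodup
      intro x hx y hy hxy
      rw [← Finset.erase_insert (hnotm2 x hx), ← Finset.erase_insert (hnotm2 y hy), hxy]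
    · intro S hS1 hS2
      obtain ⟨S', hS', rfl⟩ := List.mem_map.mp hS2
      exact hnotm1 _ hS1 (Finset.mem_insert_self m S')
  · unfold List.Chain'
    rw [List.isChain_append]
    refine ⟨h1.chain, ?_, ?_⟩
    · have := chain_map_insert (k := k') (a := m) (l := l2) ?_ h2.chain
      · exact this
      · intro S hS
        obtain ⟨hsub, hcard⟩ := (h2.mem_iff S).mp hS
        exact ⟨fun hm => by have := hsub hm; simp [Finset.mem_range] at this, hcard⟩
    · intro x hx y hy
      rw [h1.lst, Option.mem_def] at hx
      rw [List.head?_map, h2.hd, Option.mem_def] at hy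
      cases hx; cases hy
      exact hjunc
  · rw [List.head?_append, h1.hd]
    rfl
  · rw [List.getLast?_append, List.getLast?_map, h2.lst]
    rfl

lemma spec_empty (m : ℕ) : Spec m 0 (Finset.Ico 0 0) (Finset.Ico 0 0) [∅] where
  mem_iff S := by
    simp only [List.mem_singleton, Finset.card_eq_zero]
    constructor
    · rintro rfl; exact ⟨Finset.empty_subset _, rfl⟩
    · rintro ⟨-, rfl⟩; rfl
  nodup := by simp
  chain := by simp [List.Chain']
  hd := by rw [Finset.Ico_self]; rfl
  lst := by rw [Finset.Ico_self]; rfl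

lemma R_Ico_junction {a1 b1 a2 b2 x k : ℕ} (hx1 : ¬ (a1 ≤ x ∧ x < b1))
    (hsub : ∀ y, a2 ≤ y ∧ y < b2 → a1 ≤ y ∧ y < b1) (hcard : b2 - a2 = k - 1) :
    R k (Finset.Ico a1 b1) (insert x (Finset.Ico a2 b2)) := by
  constructor
  · intro he
    have hx : x ∈ Finset.Ico a1 b1 := by rw [he]; exact Finset.mem_insert_self _ _
    rw [Finset.mem_Ico] at hx
    exact hx1 hx
  · have hI : Finset.Ico a1 b1 ∩ insert x (Finset.Ico a2 b2) = Finset.Ico a2 b2 := by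
      ext y
      simp only [Finset.mem_inter, Finset.mem_insert, Finset.mem_Ico]
      constructor
      · rintro ⟨hy1, rfl | hy2⟩
        · exact absurd hy1 hx1
        · exact hy2
      · intro hy
        exact ⟨hsub y hy, Or.inr hy⟩
    rw [hI, Nat.card_Ico, hcard]

/-- The main induction: `JL p j` is a Hamiltonian chain on the `j`-subsets of `{0,…,p-1}`
from `{0,…,j-1}` to `{p-j,…,p-1}`. -/
theorem jlspec : ∀ p j : ℕ, j ≤ p →
    Spec p j (Finset.Ico 0 j) (Finset.Ico (p-j) p) (JL p j) := by
  intro p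
  induction p using Nat.strong_induction_on with
  | _ p IH =>
    intro j hj
    rw [JL]
    split_ifs with h0 h1 h2
    · -- j = 0
      subst h0
      exact (spec_empty p).cast rfl rfl (by simp) (by simp)
    · -- p = j
      have hpj : p = j := le_antisymm h1 hj
      subst hpj
      have base : Spec p p (Finset.range p) (Finset.range p) [Finset.range p] := {
        mem_iff := fun S => by
          simp only [List.mem_singleton]
          constructor
          · rintro rfl; simp
          · rintro ⟨hsub, hcard⟩
            exact Finset.eq_of_subset_of_card_le hsub (by rw [hcard, Finset.card_range])
        nodup := by simp
        chain := by simp [List.Chain']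
        hd := rfl
        lst := rfl }
      exact base.cast rfl rfl (by rw [Finset.range_eq_Ico]) (by rw [Finset.range_eq_Ico, Nat.sub_self])
    · -- j = 1, 1 < p
      subst h2
      have hp2 : 2 ≤ p := by omega
      have s1 := IH (p-1) (by omega) 1 (by omega)
      have step := spec_step (k' := 0) s1 (spec_empty (p-1))
        (R_Ico_junction (by omega) (fun y hy => by omega) (by omega))
      have hmap : ([∅] : List (Finset ℕ)).map (insert (p-1)) = [{p-1}] := by simp
      rw [hmap] at step
      exact step.cast (by omega) rfl rfl (by ext x; simp [Finset.mem_Ico, Finset.mem_insert]; omega)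
    · -- 2 ≤ j < p
      have hp3 : 3 ≤ p := by omega
      have hj2 : 2 ≤ j := by omega
      have s1 := IH (p-1) (by omega) j (by omega)
      have sA := (IH (p-2) (by omega) (j-1) (by omega)).reverse
      have sB := IH (p-2) (by omega) (j-2) (by omega)
      have sT := spec_step (k' := j-2)
        (sA.cast rfl (by omega) rfl (by rw [show j - 1 = j - 2 + 1 from by omega]))
        sB
        (R_Ico_junction (by omega) (fun y hy => by omega) (by omega))
      have sT' := sT.cast (show p-2+1 = p-1 by omega) (show j-2+1 = j-1 by omega) rfl
        (show insert (p-2) (Finset.Ico (p-2-(j-2)) (p-2)) = Finset.Ico (p-j) (p-1) by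
          ext x; simp [Finset.mem_Ico, Finset.mem_insert]; omega)
      have step := spec_step (k' := j-1)
        (s1.cast rfl (by omega) (by rw [show j = j - 1 + 1 from by omega]) rfl)
        sT'
        (R_Ico_junction (by omega) (fun y hy => by omega) (by omega))
      exact step.cast (by omega) (by omega)
        (by rw [show j - 1 + 1 = j from by omega])
        (by ext x; simp [Finset.mem_Ico, Finset.mem_insert]; omega)

/-- build a walk from a list whose consecutive elements are adjacent -/
lemma walk_of_chain {V : Type*} (G : SimpleGraph V) :
    ∀ (l : List V) (hne : l ≠ []), l.Chain' G.Adj →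
      ∃ w : G.Walk (l.head hne) (l.getLast hne), w.support = l
  | [], hne, _ => absurd rfl hne
  | [a], _, _ => ⟨SimpleGraph.Walk.nil, rfl⟩
  | a :: b :: t, hne, hc => by
    obtain ⟨hab, hc'⟩ := List.isChain_cons_cons.mp hc
    obtain ⟨w, hw⟩ := walk_of_chain G (b :: t) (by simp) hc'
    rw [show (a :: b :: t).getLast hne = (b :: t).getLast (by simp) from List.getLast_cons _]
    exact ⟨SimpleGraph.Walk.cons hab w, congrArg (List.cons a) hw⟩

lemma getLast?_pmap {α β : Type*} {P : α → Prop} (f : ∀ a, P a → β) :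
    ∀ (l : List α) (H : ∀ a ∈ l, P a) (b : α), l.getLast? = some b →
      ∃ h : P b, (List.pmap f l H).getLast? = some (f b h)
  | [], _, b, hb => by simp at hb
  | [a], H, b, hb => by
    obtain rfl : a = b := by simpa using hb
    exact ⟨H a (by simp), rfl⟩
  | a :: c :: t, H, b, hb => by
    rw [List.getLast?_cons_cons] at hb
    obtain ⟨h, hl⟩ := getLast?_pmap f (c :: t) (fun x hx => H x (by simp [List.mem_cons] at hx ⊢; tauto)) b hb
    exact ⟨h, by rw [← hl]; rfl⟩

lemma head?_pmap {α β : Type*} {P : α → Prop} (f : ∀ a, P a → β) :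
    ∀ (l : List α) (H : ∀ a ∈ l, P a) (b : α), l.head? = some b →
      ∃ h : P b, (List.pmap f l H).head? = some (f b h)
  | [], _, b, hb => by simp at hb
  | a :: t, H, b, hb => by
    obtain rfl : a = b := by simpa using hb
    exact ⟨H a (by simp), rfl⟩

lemma chain'_pmap {α β : Type*} {P : α → Prop} (f : ∀ a, P a → β)
    {Rα : α → α → Prop} {Rβ : β → β → Prop}
    (hf : ∀ a ha b hb, Rα a b → Rβ (f a ha) (f b hb)) :
    ∀ (l : List α) (H : ∀ a ∈ l, P a), l.Chain' Rα → (List.pmap f l H).Chain' Rβ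
  | [], _, _ => by simp [List.Chain']
  | [a], _, _ => by simp [List.pmap, List.Chain']
  | a :: c :: t, H, hc => by
    obtain ⟨hac, hc'⟩ := List.isChain_cons_cons.mp hc
    have ih := chain'_pmap f hf (c :: t) (fun x hx => H x (by simp [List.mem_cons] at hx ⊢; tauto)) hc'
    exact List.isChain_cons_cons.mpr ⟨hf _ _ _ _ hac, ih⟩

/-- the subset of `Fin p` corresponding to a set of naturals -/
def fset (p : ℕ) (S : Finset ℕ) : Finset (Fin p) :=
  Finset.univ.filter (fun i : Fin p => (i : ℕ) ∈ S)

lemma fset_card {p : ℕ} {S : Finset ℕ} (hS : S ⊆ Finset.range p) :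
    (fset p S).card = S.card := by
  have h : fset p S = S.attachFin (fun m hm => Finset.mem_range.mp (hS hm)) := by
    ext i; simp [fset, Finset.mem_attachFin]
  rw [h, Finset.card_attachFin]

lemma fset_inj {p : ℕ} {S T : Finset ℕ} (hS : S ⊆ Finset.range p) (hT : T ⊆ Finset.range p)
    (h : fset p S = fset p T) : S = T := by
  ext n
  by_cases hn : n < p
  · have := Finset.ext_iff.mp h ⟨n, hn⟩
    simpa [fset] using this
  · constructor
    · intro hmem; exact absurd (Finset.mem_range.mp (hS hmem)) hn
    · intro hmem; exact absurd (Finset.mem_range.mp (hT hmem)) hn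

lemma fset_inter {p : ℕ} (S T : Finset ℕ) : fset p (S ∩ T) = fset p S ∩ fset p T := by
  ext i; simp [fset]

end JGProof

/-- **Lemma (Hamiltonian paths in Johnson graphs).**
For `1 ≤ j ≤ p`, the Johnson graph `G(j,p)` contains a Hamiltonian path that starts at the
set `{1,…,j}` and ends at the set `{p-j+1,…,p}`. -/
theorem johnsonGraph_hamiltonian_path (p j : ℕ) (hj : 1 ≤ j) (hp : j ≤ p) :
    ∃ (u v : {S : Finset (Fin p) // S.card = j}) (walk : (johnsonGraph p j).Walk u v),
      u.1 = Finset.univ.filter (fun i : Fin p => (i : ℕ) < j) ∧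
      v.1 = Finset.univ.filter (fun i : Fin p => p - j ≤ (i : ℕ)) ∧
      walk.IsHamiltonian := by
  classical
  clear hj
  open JGProof in
  have spec := jlspec p j hp
  open JGProof in
  set P : Finset ℕ → Prop := fun S => S ⊆ Finset.range p ∧ S.card = j with hP
  have H : ∀ S ∈ JGProof.JL p j, P S := fun S hS => (spec.mem_iff S).mp hS
  set f : ∀ S : Finset ℕ, P S → {S : Finset (Fin p) // S.card = j} :=
    fun S h => ⟨JGProof.fset p S, by rw [JGProof.fset_card h.1]; exact h.2⟩ with hf
  set FL := List.pmap f (JGProof.JL p j) H with hFL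
  have hne : JGProof.JL p j ≠ [] := spec.ne_nil
  have hneF : FL ≠ [] := by
    simp only [hFL, ne_eq, List.pmap_eq_nil_iff]
    exact hne
  have hadj : ∀ (a : Finset ℕ) (ha : P a) (b : Finset ℕ) (hb : P b),
      JGProof.R j a b → (johnsonGraph p j).Adj (f a ha) (f b hb) := by
    intro a ha b hb hR
    constructor
    · intro he
      exact hR.1 (JGProof.fset_inj ha.1 hb.1 (congrArg Subtype.val he))
    · show (JGProof.fset p a ∩ JGProof.fset p b).card = j - 1
      rw [← JGProof.fset_inter, JGProof.fset_card (fun x hx => ha.1 (Finset.mem_inter.mp hx).1)]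
      exact hR.2
  have chainF : FL.Chain' (johnsonGraph p j).Adj :=
    JGProof.chain'_pmap f hadj (JGProof.JL p j) H spec.chain
  obtain ⟨w, hw⟩ := JGProof.walk_of_chain (johnsonGraph p j) FL hneF chainF
  refine ⟨FL.head hneF, FL.getLast hneF, w, ?_, ?_, ?_⟩
  · -- start
    obtain ⟨h1, h2⟩ := JGProof.head?_pmap f (JGProof.JL p j) H _ spec.hd
    have hsome : FL.head? = some (FL.head hneF) := List.head?_eq_head hneF
    rw [← hFL] at h2
    rw [h2] at hsome
    have heq : FL.head hneF = f (Finset.Ico 0 j) h1 := (Option.some.inj hsome).symm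
    rw [heq]
    show JGProof.fset p (Finset.Ico 0 j) = _
    ext i; simp [JGProof.fset, Finset.mem_Ico]
  · -- end
    obtain ⟨h1, h2⟩ := JGProof.getLast?_pmap f (JGProof.JL p j) H _ spec.lst
    have hsome : FL.getLast? = some (FL.getLast hneF) := List.getLast?_eq_getLast hneF
    rw [← hFL] at h2
    rw [h2] at hsome
    have heq : FL.getLast hneF = f (Finset.Ico (p-j) p) h1 := (Option.some.inj hsome).symm
    rw [heq]
    show JGProof.fset p (Finset.Ico (p-j) p) = _
    ext i
    simp only [JGProof.fset, Finset.mem_filter, Finset.mem_univ, true_and, Finset.mem_Ico]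
    exact ⟨fun h => h.1, fun h => ⟨h, i.isLt⟩⟩
  · -- Hamiltonian
    intro v
    rw [hw]
    have nodupF : FL.Nodup := by
      refine List.Nodup.pmap ?_ spec.nodup
      intro a ha b hb hab
      exact JGProof.fset_inj ha.1 hb.1 (congrArg Subtype.val hab)
    have memF : v ∈ FL := by
      have hsub : v.1.image Fin.val ⊆ Finset.range p := by
        intro x hx
        obtain ⟨i, _, rfl⟩ := Finset.mem_image.mp hx
        exact Finset.mem_range.mpr i.isLt
      have hcard : (v.1.image Fin.val).card = j := by
        rw [Finset.card_image_of_injective _ Fin.val_injective, v.2]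
      have hmem : v.1.image Fin.val ∈ JGProof.JL p j := (spec.mem_iff _).mpr ⟨hsub, hcard⟩
      refine List.mem_pmap.mpr ⟨v.1.image Fin.val, hmem, ?_⟩
      apply Subtype.ext
      show JGProof.fset p (v.1.image Fin.val) = v.1
      ext i
      simp only [JGProof.fset, Finset.mem_filter, Finset.mem_univ, true_and, Finset.mem_image]
      constructor
      · rintro ⟨i', hi', hii⟩
        rwa [← Fin.val_injective hii]
      · intro hi
        exact ⟨i, hi, rfl⟩
    exact @List.count_eq_one_of_mem _ instBEqOfDecidableEq _ _ _ nodupF memF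
end

section
/- Let r, p, and j be integers with 2 ≤ r ≤ p and 1 ≤ j ≤ p−1. The graph whose vertices are the j-element subsets of {1,…,p} that contain at least one element smaller than r, with two vertices adjacent exactly when the corresponding subsets have j−1 elements in common, contains a Hamiltonian path. -/
/-- The restricted Johnson graph `G̃(j,p,r)`: vertices are the `j`-element subsets of
`{1,…,p}` (modelled as `Fin p`, with `i : Fin p` standing for the number `i+1`) that
contain at least one element strictly smaller than `r`, and two distinct subsets are
adjacent exactly when their intersection has `j-1` elements. -/
def restrictedJohnsonGraph (p j r : ℕ) :
    SimpleGraph {S : Finset (Fin p) // S.card = j ∧ ∃ i ∈ S, (i : ℕ) + 1 < r} where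
  Adj S T := S ≠ T ∧ (S.1 ∩ T.1).card = j - 1
  symm := by
    constructor
    intro S T h
    exact ⟨h.1.symm, by rw [Finset.inter_comm]; exact h.2⟩
  loopless := by
    constructor
    intro S h
    exact h.1 rfl

namespace RJG
open Finset List

/-- Swap relation: `S` and `T` differ by exchanging one element. -/
def R (S T : Finset ℕ) : Prop := (S \ T).card = 1 ∧ (T \ S).card = 1

lemma R.symm {S T : Finset ℕ} (h : R S T) : R T S := ⟨h.2, h.1⟩

lemma R.ne {S T : Finset ℕ} (h : R S T) : S ≠ T := by
  rintro rfl; simp [R] at h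

lemma R_seam {S T : Finset ℕ} {m : ℕ} (hTS : T ⊆ S) (hc : S.card = T.card + 1)
    (hm : m ∉ S) : R S (insert m T) := by
  constructor
  · have h1 : S \ insert m T = S \ T := by
      ext x
      simp only [mem_sdiff, mem_insert, not_or]
      constructor
      · rintro ⟨h1, h2, h3⟩; exact ⟨h1, h3⟩
      · rintro ⟨h1, h2⟩; exact ⟨h1, fun hx => hm (hx ▸ h1), h2⟩
    rw [h1, card_sdiff_of_subset hTS, hc]; omega
  · have h2 : insert m T \ S = {m} := by
      ext x
      simp only [mem_sdiff, mem_insert, Finset.mem_singleton]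
      constructor
      · rintro ⟨h1 | h1, h2⟩
        · exact h1
        · exact absurd (hTS h1) h2
      · rintro rfl; exact ⟨Or.inl rfl, hm⟩
    rw [h2, card_singleton]

lemma R_insert {S T : Finset ℕ} {m : ℕ} (hS : m ∉ S) (hT : m ∉ T) (h : R S T) :
    R (insert m S) (insert m T) := by
  have key : ∀ A B : Finset ℕ, m ∉ A → insert m A \ insert m B = A \ B := by
    intro A B hA
    ext x
    simp only [mem_sdiff, mem_insert, not_or]
    constructor
    · rintro ⟨h1 | h1, h2, h3⟩
      · exact absurd h1 h2
      · exact ⟨h1, h3⟩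
    · rintro ⟨h1, h2⟩
      exact ⟨Or.inr h1, fun hx => hA (hx ▸ h1), h2⟩
  exact ⟨by rw [key S T hS]; exact h.1, by rw [key T S hT]; exact h.2⟩

lemma chain'_map_mem {α β : Type*} {Rel : α → α → Prop} {S : β → β → Prop} (f : α → β) :
    ∀ {l : List α}, l.IsChain Rel → (∀ a ∈ l, ∀ b ∈ l, Rel a b → S (f a) (f b)) →
      (l.map f).IsChain S
  | [], _, _ => by simp
  | [a], _, _ => by simp
  | a :: b :: t, h, H => by
    rw [List.isChain_cons_cons] at h
    rw [List.map_cons, List.map_cons, List.isChain_cons_cons]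
    refine ⟨H a (by simp) b (by simp) h.1, ?_⟩
    rw [← List.map_cons]
    exact chain'_map_mem f h.2 (fun x hx y hy hR => H x (by simp [hx]) y (by simp [hy]) hR)

/-- The revolving-door Gray code on `k`-subsets of `range n`. -/
def L : ℕ → ℕ → List (Finset ℕ)
  | _, 0 => [∅]
  | 0, _ + 1 => []
  | n + 1, k + 1 => L n (k + 1) ++ ((L n k).map (insert n)).reverse

lemma mem_L : ∀ (n k : ℕ) (S : Finset ℕ), S ∈ L n k ↔ S ⊆ Finset.range n ∧ S.card = k
  | n, 0, S => by
    simp only [L, List.mem_singleton, card_eq_zero]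
    constructor
    · rintro rfl; exact ⟨empty_subset _, rfl⟩
    · rintro ⟨-, rfl⟩; rfl
  | 0, k + 1, S => by
    simp only [L, List.not_mem_nil, false_iff, not_and, Finset.range_zero, subset_empty]
    rintro rfl
    simp
  | n + 1, k + 1, S => by
    simp only [L, List.mem_append, List.mem_reverse, List.mem_map, mem_L]
    constructor
    · rintro (⟨h1, h2⟩ | ⟨T, ⟨hT1, hT2⟩, rfl⟩)
      · exact ⟨h1.trans (Finset.range_subset_range.mpr (by omega)), h2⟩
      · have hn : n ∉ T := fun h => by simpa using hT1 h
        refine ⟨?_, by rw [card_insert_of_notMem hn, hT2]⟩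
        rw [Finset.range_add_one]
        exact insert_subset_insert _ hT1
    · rintro ⟨h1, h2⟩
      by_cases hn : n ∈ S
      · right
        refine ⟨S.erase n, ⟨?_, ?_⟩, insert_erase hn⟩
        · intro x hx
          have hx1 := h1 (mem_of_mem_erase hx)
          have hx2 := ne_of_mem_erase hx
          simp only [Finset.mem_range] at hx1 ⊢
          omega
        · rw [card_erase_of_mem hn, h2]
          omega
      · left
        refine ⟨?_, h2⟩
        intro x hx
        have := h1 hx
        simp only [Finset.mem_range] at this ⊢
        rcases Nat.lt_succ_iff_lt_or_eq.mp this with h | h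
        · exact h
        · exact absurd (h ▸ hx) hn

lemma L_eq_nil {n k : ℕ} (h : n < k) : L n k = [] := by
  rw [List.eq_nil_iff_forall_not_mem]
  intro S hS
  rw [mem_L] at hS
  have := Finset.card_le_card hS.1
  rw [hS.2, card_range] at this
  omega

lemma L_self : ∀ n, L n n = [Finset.range n]
  | 0 => by simp [L]
  | n + 1 => by
    rw [L, L_eq_nil (by omega), L_self n]
    simp [Finset.range_add_one]

lemma head?_L : ∀ {n k : ℕ}, k ≤ n → (L n k).head? = some (Finset.range k)
  | n, 0, _ => by simp [L]
  | 0, k + 1, h => by omega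
  | n + 1, k + 1, h => by
    rw [L]
    rcases Nat.lt_or_ge k n with h' | h'
    · have hne : L n (k + 1) ≠ [] :=
        List.ne_nil_of_mem ((mem_L n (k+1) (Finset.range (k+1))).mpr
          ⟨Finset.range_subset_range.mpr (by omega), card_range _⟩)
      rw [List.head?_append, head?_L (by omega)]
      simp
    · have hk : k = n := by omega
      subst hk
      rw [L_eq_nil (by omega), List.nil_append, L_self]
      simp [Finset.range_add_one]

lemma getLast?_L : ∀ {n k : ℕ}, 1 ≤ k → k ≤ n →
    (L n k).getLast? = some (insert (n - 1) (Finset.range (k - 1)))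
  | 0, k, h1, h2 => by omega
  | n + 1, 0, h1, _ => by omega
  | n + 1, k + 1, _, h2 => by
    rw [L]
    have hne : ((L n k).map (insert n)).reverse ≠ [] := by
      simp only [ne_eq, List.reverse_eq_nil_iff, List.map_eq_nil_iff]
      exact List.ne_nil_of_mem ((mem_L n k (Finset.range k)).mpr
        ⟨Finset.range_subset_range.mpr (by omega), card_range _⟩)
    rw [List.getLast?_append_of_ne_nil _ hne, List.getLast?_reverse, List.head?_map,
      head?_L (by omega : k ≤ n)]
    simp

lemma nodup_L : ∀ (n k : ℕ), (L n k).Nodup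
  | _, 0 => by simp [L]
  | 0, k + 1 => by simp [L]
  | n + 1, k + 1 => by
    rw [L, List.nodup_append]
    refine ⟨nodup_L n (k+1), List.nodup_reverse.mpr ?_, ?_⟩
    · refine List.Nodup.map_on ?_ (nodup_L n k)
      intro x hx y hy hxy
      have hxn : n ∉ x := fun h => by simpa using ((mem_L n k x).mp hx).1 h
      have hyn : n ∉ y := fun h => by simpa using ((mem_L n k y).mp hy).1 h
      have := congrArg (Finset.erase · n) hxy
      simpa [erase_insert hxn, erase_insert hyn] using this
    · intro x hx y hx' hxy
      have hxn : n ∉ x := fun h => by simpa using ((mem_L n (k+1) x).mp hx).1 h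
      rw [List.mem_reverse, List.mem_map] at hx'
      obtain ⟨T, -, rfl⟩ := hx'
      exact hxn (hxy ▸ mem_insert_self n T)

lemma chain'_L : ∀ (n k : ℕ), (L n k).IsChain R
  | _, 0 => by simp [L]
  | 0, k + 1 => by simp [L]
  | n + 1, k + 1 => by
    rw [L, List.isChain_append]
    refine ⟨chain'_L n (k+1), ?_, ?_⟩
    · rw [List.isChain_reverse]
      have : ((L n k).map (insert n)).IsChain R := by
        refine chain'_map_mem _ (chain'_L n k) ?_
        intro a ha b hb hab
        have han : n ∉ a := fun h => by simpa using ((mem_L n k a).mp ha).1 h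
        have hbn : n ∉ b := fun h => by simpa using ((mem_L n k b).mp hb).1 h
        exact R_insert han hbn hab
      exact this.imp (fun a b h => h.symm)
    · intro x hx y hy
      have hxl := List.mem_of_mem_getLast? hx
      have hxm := (mem_L n (k+1) x).mp hxl
      have hkn : k + 1 ≤ n := by
        have := Finset.card_le_card hxm.1
        rw [hxm.2, card_range] at this
        omega
      rw [getLast?_L (by omega) hkn] at hx
      simp only [Option.mem_def, Option.some_inj] at hx
      subst hx
      rw [List.head?_reverse, List.getLast?_map] at hy
      rcases Nat.eq_zero_or_pos k with hk | hk
      · subst hk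
        simp only [L, List.getLast?_singleton, Option.map_some] at hy
        simp only [Option.mem_def, Option.some_inj] at hy
        subst hy
        simp only [Nat.add_sub_cancel, Finset.range_zero]
        refine R_seam (empty_subset _) (by simp) ?_
        simp only [mem_insert, Finset.mem_range]
        push_neg
        exact ⟨by omega, by simp⟩
      · rw [getLast?_L hk (by omega)] at hy
        simp only [Option.map_some, Option.mem_def, Option.some_inj] at hy
        subst hy
        refine R_seam ?_ ?_ ?_
        · simp only [Nat.add_sub_cancel]
          exact insert_subset_insert _ (Finset.range_subset_range.mpr (by omega))
        · rw [card_insert_of_notMem (by simp; omega), card_insert_of_notMem (by simp; omega),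
            card_range, card_range]
          omega
        · simp only [mem_insert, Finset.mem_range, Nat.add_sub_cancel]
          push_neg
          constructor <;> omega


/-- First element index for the `j = 1` code at level `q`. -/
def fst1 (r q : ℕ) : ℕ := if r ≤ 2 then 0 else if (q - r) % 2 = 0 then 1 else 0

/-- Last element index for the `j = 1` code at level `q`. -/
def lst1 (r q : ℕ) : ℕ := if r ≤ 2 then 0 else 1 - fst1 r q

lemma fst1_le_one (r q : ℕ) : fst1 r q ≤ 1 := by
  unfold fst1; split_ifs <;> omega

lemma lst1_le_one (r q : ℕ) : lst1 r q ≤ 1 := by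
  unfold lst1; split_ifs <;> omega

/-- The `j = 1` code (as a list of natural numbers) at level `q`. -/
def J1nat (r q : ℕ) : List ℕ :=
  if r ≤ 2 then [0]
  else (fst1 r q :: (List.range (r - 3)).map (· + 2)) ++ [1 - fst1 r q]

/-- The `j = 1` code at level `q`: all singletons `{x}` with `x + 1 < r`. -/
def J1 (r q : ℕ) : List (Finset ℕ) := (J1nat r q).map (fun x => ({x} : Finset ℕ))

lemma mem_J1nat {r q : ℕ} (hr : 2 ≤ r) {x : ℕ} : x ∈ J1nat r q ↔ x + 1 < r := by
  have hf := fst1_le_one r q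
  unfold J1nat
  split_ifs with h
  · simp; omega
  · simp only [List.mem_append, List.mem_cons, List.mem_map, List.mem_range,
      List.mem_singleton, List.not_mem_nil, or_false]
    constructor
    · rintro ((rfl | ⟨i, hi, rfl⟩) | rfl) <;> omega
    · intro hx
      rcases Nat.lt_or_ge x 2 with h2 | h2
      · rcases Nat.eq_zero_or_pos (fst1 r q) with hf0 | hf1
        · rcases Nat.lt_or_ge x 1 with h3 | h3
          · exact Or.inl (Or.inl (by omega))
          · exact Or.inr (by omega)
        · rcases Nat.lt_or_ge x 1 with h3 | h3
          · exact Or.inr (by omega)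
          · exact Or.inl (Or.inl (by omega))
      · exact Or.inl (Or.inr ⟨x - 2, by omega, by omega⟩)

lemma mem_J1 {r q : ℕ} (hr : 2 ≤ r) {S : Finset ℕ} :
    S ∈ J1 r q ↔ ∃ x, x + 1 < r ∧ S = {x} := by
  unfold J1
  simp only [List.mem_map]
  constructor
  · rintro ⟨x, hx, rfl⟩; exact ⟨x, (mem_J1nat hr).mp hx, rfl⟩
  · rintro ⟨x, hx, rfl⟩; exact ⟨x, (mem_J1nat hr).mpr hx, rfl⟩

lemma nodup_J1nat (r q : ℕ) : (J1nat r q).Nodup := by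
  have hf := fst1_le_one r q
  unfold J1nat
  split_ifs with h
  · simp
  · rw [List.nodup_append]
    refine ⟨?_, by simp, ?_⟩
    · rw [List.nodup_cons]
      constructor
      · simp only [List.mem_map, List.mem_range]
        rintro ⟨i, hi, hie⟩; omega
      · exact List.Nodup.map (fun a b hab => by simpa using hab) List.nodup_range
    · intro x hx y hx' hxy
      simp only [List.mem_cons, List.mem_map, List.mem_range] at hx
      simp only [List.mem_singleton] at hx'
      subst hx'
      rcases hx with h1 | ⟨i, hi, h1⟩ <;> omega

lemma nodup_J1 (r q : ℕ) : (J1 r q).Nodup :=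
  (nodup_J1nat r q).map (fun a b hab => Finset.singleton_injective hab)

lemma R_singleton {a b : ℕ} (hab : a ≠ b) : R {a} {b} := by
  have h1 : ({a} : Finset ℕ) \ {b} = {a} := by
    ext x
    simp only [mem_sdiff, Finset.mem_singleton]
    constructor
    · exact fun h => h.1
    · rintro rfl; exact ⟨rfl, hab⟩
  have h2 : ({b} : Finset ℕ) \ {a} = {b} := by
    ext x
    simp only [mem_sdiff, Finset.mem_singleton]
    constructor
    · exact fun h => h.1
    · rintro rfl; exact ⟨rfl, hab.symm⟩
  exact ⟨by rw [h1]; simp, by rw [h2]; simp⟩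

lemma chain'_J1 (r q : ℕ) : (J1 r q).IsChain R := by
  have : (J1nat r q).Pairwise (fun a b => R {a} {b}) := by
    refine (nodup_J1nat r q).imp ?_
    exact fun hab => R_singleton hab
  exact ((List.pairwise_map).mpr this).isChain

lemma head?_J1 (r q : ℕ) : (J1 r q).head? = some {fst1 r q} := by
  unfold J1 J1nat fst1
  split_ifs <;> simp

lemma getLast?_J1 (r q : ℕ) : (J1 r q).getLast? = some {lst1 r q} := by
  unfold J1 J1nat lst1
  split_ifs with h
  · simp
  · rw [List.map_append, List.getLast?_append_of_ne_nil _ (by simp)]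
    simp

/-- The Hamiltonian list for the restricted Johnson graph: all `j`-subsets of
`range p` containing an element `< r - 1`. -/
def M (r p j : ℕ) : List (Finset ℕ) :=
  if j = 0 then []
  else if j = 1 then J1 r p
  else if p ≤ r then L r j
  else M r (p - 1) j ++ ((M r (p - 1) (j - 1)).map (insert (p - 1))).reverse
  termination_by p
  decreasing_by all_goals omega

lemma M_def (r p j : ℕ) : M r p j =
    if j = 0 then []
    else if j = 1 then J1 r p
    else if p ≤ r then L r j
    else M r (p - 1) j ++ ((M r (p - 1) (j - 1)).map (insert (p - 1))).reverse := by
  rw [M]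

lemma M_one (r p : ℕ) : M r p 1 = J1 r p := by rw [M_def]; simp

lemma mem_M {r : ℕ} (hr : 2 ≤ r) : ∀ {p : ℕ}, r ≤ p → ∀ {j : ℕ}, 1 ≤ j →
    ∀ {S : Finset ℕ}, (S ∈ M r p j ↔ S ⊆ Finset.range p ∧ S.card = j ∧ ∃ i ∈ S, i + 1 < r) := by
  intro p hrp
  induction p, hrp using Nat.le_induction with
  | base =>
    intro j hj S
    rw [M_def]
    rcases Nat.lt_or_ge j 2 with hj2 | hj2
    · have : j = 1 := by omega
      subst this
      simp only [Nat.one_ne_zero, if_false, if_true]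
      rw [mem_J1 hr]
      constructor
      · rintro ⟨x, hx, rfl⟩
        exact ⟨by simp [Finset.singleton_subset_iff, Finset.mem_range]; omega, by simp,
          x, by simp, hx⟩
      · rintro ⟨h1, h2, i, hi, hir⟩
        obtain ⟨x, rfl⟩ := Finset.card_eq_one.mp h2
        rw [Finset.mem_singleton] at hi
        subst hi
        exact ⟨i, hir, rfl⟩
    · have h0 : ¬ j = 0 := by omega
      have h1 : ¬ j = 1 := by omega
      simp only [h0, h1, if_false, le_refl, if_true]
      rw [mem_L]
      constructor
      · rintro ⟨hsub, hcard⟩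
        refine ⟨hsub, hcard, ?_⟩
        by_contra hlow
        push_neg at hlow
        have hsub2 : S ⊆ {r - 1} := by
          intro x hx
          have hx1 := hsub hx
          have hx2 := hlow x hx
          rw [Finset.mem_range] at hx1
          rw [Finset.mem_singleton]
          omega
        have := Finset.card_le_card hsub2
        rw [hcard, Finset.card_singleton] at this
        omega
      · rintro ⟨h1, h2, -⟩
        exact ⟨h1, h2⟩
  | succ p hp IH =>
    intro j hj S
    rcases Nat.lt_or_ge j 2 with hj2 | hj2
    · have : j = 1 := by omega
      subst this
      rw [M_one, mem_J1 hr]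
      constructor
      · rintro ⟨x, hx, rfl⟩
        exact ⟨by simp [Finset.singleton_subset_iff, Finset.mem_range]; omega, by simp,
          x, by simp, hx⟩
      · rintro ⟨h1, h2, i, hi, hir⟩
        obtain ⟨x, rfl⟩ := Finset.card_eq_one.mp h2
        rw [Finset.mem_singleton] at hi
        subst hi
        exact ⟨i, hir, rfl⟩
    · rw [M_def]
      have h0 : ¬ j = 0 := by omega
      have h1 : ¬ j = 1 := by omega
      have h2 : ¬ p + 1 ≤ r := by omega
      simp only [h0, h1, h2, if_false, Nat.add_sub_cancel]
      rw [List.mem_append, List.mem_reverse, List.mem_map]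
      rw [IH (by omega)]
      constructor
      · rintro (⟨ha, hb, hc⟩ | ⟨T, hT, rfl⟩)
        · exact ⟨ha.trans (Finset.range_subset_range.mpr (by omega)), hb, hc⟩
        · rw [IH (by omega)] at hT
          obtain ⟨ha, hb, i, hi, hir⟩ := hT
          have hpn : p ∉ T := fun h => by simpa using ha h
          refine ⟨?_, ?_, i, Finset.mem_insert_of_mem hi, hir⟩
          · rw [Finset.range_add_one]
            exact Finset.insert_subset_insert _ ha
          · rw [Finset.card_insert_of_notMem hpn, hb]
            omega
      · rintro ⟨ha, hb, i, hi, hir⟩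
        by_cases hp' : p ∈ S
        · right
          refine ⟨S.erase p, ?_, Finset.insert_erase hp'⟩
          rw [IH (by omega)]
          refine ⟨?_, ?_, i, ?_, hir⟩
          · intro x hx
            have hx1 := ha (Finset.mem_of_mem_erase hx)
            have hx2 := Finset.ne_of_mem_erase hx
            rw [Finset.mem_range] at hx1 ⊢
            omega
          · rw [Finset.card_erase_of_mem hp', hb]
          · refine Finset.mem_erase.mpr ⟨?_, hi⟩
            omega
        · left
          refine ⟨?_, hb, i, hi, hir⟩
          intro x hx
          have := ha hx
          rw [Finset.mem_range] at this ⊢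
          rcases Nat.lt_succ_iff_lt_or_eq.mp this with h | h
          · exact h
          · exact absurd (h ▸ hx) hp'

lemma M_eq_nil {r p j : ℕ} (hr : 2 ≤ r) (hrp : r ≤ p) (h : p < j) : M r p j = [] := by
  rw [List.eq_nil_iff_forall_not_mem]
  intro S hS
  rw [mem_M hr hrp (by omega)] at hS
  have := Finset.card_le_card hS.1
  rw [hS.2.1, Finset.card_range] at this
  omega

lemma M_self {r : ℕ} (hr : 2 ≤ r) : ∀ {p : ℕ}, r ≤ p → M r p p = [Finset.range p] := by
  intro p hrp
  induction p, hrp using Nat.le_induction with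
  | base =>
    rw [M_def]
    have h0 : ¬ r = 0 := by omega
    have h1 : ¬ r = 1 := by omega
    simp only [h0, h1, if_false, le_refl, if_true]
    exact L_self r
  | succ p hp IH =>
    rw [M_def]
    have h0 : ¬ p + 1 = 0 := by omega
    have h1 : ¬ p + 1 = 1 := by omega
    have h2 : ¬ p + 1 ≤ r := by omega
    simp only [h0, h1, h2, if_false, Nat.add_sub_cancel]
    rw [M_eq_nil hr hp (by omega), IH, List.nil_append]
    simp [Finset.range_add_one]

lemma M_ne_nil {r p j : ℕ} (hr : 2 ≤ r) (hrp : r ≤ p) (hj : 1 ≤ j) (hjp : j ≤ p) :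
    M r p j ≠ [] := by
  refine List.ne_nil_of_mem (a := Finset.range j) ?_
  rw [mem_M hr hrp hj]
  exact ⟨Finset.range_subset_range.mpr hjp, Finset.card_range j, 0, by
    simp [Finset.mem_range]; omega, by omega⟩

lemma head?_M {r : ℕ} (hr : 2 ≤ r) : ∀ {p : ℕ}, r ≤ p → ∀ {j : ℕ}, 2 ≤ j → j ≤ p →
    (M r p j).head? = some (Finset.range j) := by
  intro p hrp
  induction p, hrp using Nat.le_induction with
  | base =>
    intro j hj hjp
    rw [M_def]
    have h0 : ¬ j = 0 := by omega
    have h1 : ¬ j = 1 := by omega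
    simp only [h0, h1, if_false, le_refl, if_true]
    exact head?_L hjp
  | succ p hp IH =>
    intro j hj hjp
    rw [M_def]
    have h0 : ¬ j = 0 := by omega
    have h1 : ¬ j = 1 := by omega
    have h2 : ¬ p + 1 ≤ r := by omega
    simp only [h0, h1, h2, if_false, Nat.add_sub_cancel]
    rcases Nat.lt_or_ge j (p + 1) with hlt | hge
    · rw [List.head?_append, IH hj (by omega)]
      simp
    · have hj' : j = p + 1 := by omega
      subst hj'
      simp only [Nat.add_sub_cancel]
      rw [M_eq_nil hr hp (by omega), M_self hr hp, List.nil_append]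
      simp [Finset.range_add_one]

/-- The low endpoint of the last set in `M r p 2`. -/
def e2 (r p : ℕ) : ℕ := if p ≤ r then 0 else fst1 r (p - 1)

lemma e2_le_one (r p : ℕ) : e2 r p ≤ 1 := by
  unfold e2; split_ifs; omega; exact fst1_le_one _ _

lemma e2_ne {r p : ℕ} (hr : 2 ≤ r) (hrp : r ≤ p) : e2 r p ≠ p - 1 := by
  rcases Nat.lt_or_ge p 3 with h | h
  · have hp2 : p = 2 := by omega
    have hr2 : r = 2 := by omega
    subst hp2
    subst hr2
    simp [e2]
  · have := e2_le_one r p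
    omega

lemma lst1_eq_e2 {r p : ℕ} (hr : 2 ≤ r) (hrp : r ≤ p) : lst1 r p = e2 r p := by
  unfold lst1 e2 fst1
  rcases Nat.lt_or_ge r 3 with h3 | h3
  · have : r ≤ 2 := by omega
    simp [this]
  · have h2 : ¬ r ≤ 2 := by omega
    simp only [h2, if_false]
    split_ifs <;> omega

lemma getLast?_M1 {r p : ℕ} : (M r p 1).getLast? = some {lst1 r p} := by
  rw [M_one]; exact getLast?_J1 r p

lemma getLast?_M2 {r p : ℕ} (hr : 2 ≤ r) (hrp : r ≤ p) :
    (M r p 2).getLast? = some (insert (p - 1) {e2 r p}) := by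
  rcases Nat.eq_or_lt_of_le hrp with rfl | hlt
  · rw [M_def, if_neg (by norm_num), if_neg (by norm_num), if_pos le_rfl]
    rw [getLast?_L (by omega) (by omega)]
    unfold e2
    rw [if_pos le_rfl, Finset.range_one]
  · have h2' : ¬ p ≤ r := by omega
    rw [M_def, if_neg (by norm_num), if_neg (by norm_num), if_neg h2']
    have hne : ((M r (p-1) (2-1)).map (insert (p-1))).reverse ≠ [] := by
      simp only [ne_eq, List.reverse_eq_nil_iff, List.map_eq_nil_iff]
      exact M_ne_nil hr (by omega) (by omega) (by omega)
    rw [List.getLast?_append_of_ne_nil _ hne, List.getLast?_reverse, List.head?_map]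
    have h21 : (2:ℕ) - 1 = 1 := rfl
    rw [h21, M_one, head?_J1]
    unfold e2
    simp [h2']

lemma getLast?_M3 {r p j : ℕ} (hr : 2 ≤ r) (hrp : r ≤ p) (hj : 3 ≤ j) (hjp : j ≤ p) :
    (M r p j).getLast? = some (insert (p - 1) (Finset.range (j - 1))) := by
  rcases Nat.eq_or_lt_of_le hrp with rfl | hlt
  · rw [M_def]
    have h0 : ¬ j = 0 := by omega
    have h1 : ¬ j = 1 := by omega
    simp only [h0, h1, if_false, le_refl, if_true]
    exact getLast?_L (by omega) hjp
  · rw [M_def]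
    have h0 : ¬ j = 0 := by omega
    have h1 : ¬ j = 1 := by omega
    have h2 : ¬ p ≤ r := by omega
    simp only [h0, h1, h2, if_false]
    have hne : ((M r (p-1) (j-1)).map (insert (p-1))).reverse ≠ [] := by
      simp only [ne_eq, List.reverse_eq_nil_iff, List.map_eq_nil_iff]
      exact M_ne_nil hr (by omega) (by omega) (by omega)
    rw [List.getLast?_append_of_ne_nil _ hne, List.getLast?_reverse, List.head?_map,
      head?_M hr (by omega) (by omega) (by omega)]
    simp

lemma nodup_M {r : ℕ} (hr : 2 ≤ r) : ∀ {p : ℕ}, r ≤ p → ∀ (j : ℕ), (M r p j).Nodup := by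
  intro p hrp
  induction p, hrp using Nat.le_induction with
  | base =>
    intro j
    rw [M_def]
    split_ifs
    · simp
    · exact nodup_J1 r r
    · exact nodup_L r j
    · omega
  | succ p hp IH =>
    intro j
    rcases Nat.lt_or_ge j 2 with hj2 | hj2
    · rw [M_def]
      split_ifs
      · simp
      · exact nodup_J1 _ _
      · omega
      · omega
    · rw [M_def, if_neg (by omega), if_neg (by omega), if_neg (by omega)]
      simp only [Nat.add_sub_cancel]
      rw [List.nodup_append]
      refine ⟨IH j, List.nodup_reverse.mpr ?_, ?_⟩
      · refine List.Nodup.map_on ?_ (IH (j-1))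
        intro x hx y hy hxy
        have hxn : p ∉ x := fun h => by
          simpa using ((mem_M hr hp (by omega)).mp hx).1 h
        have hyn : p ∉ y := fun h => by
          simpa using ((mem_M hr hp (by omega)).mp hy).1 h
        have := congrArg (Finset.erase · p) hxy
        simpa [Finset.erase_insert hxn, Finset.erase_insert hyn] using this
      · intro x hx y hx' hxy
        have hxn : p ∉ x := fun h => by
          simpa using ((mem_M hr hp (by omega)).mp hx).1 h
        rw [List.mem_reverse, List.mem_map] at hx'
        obtain ⟨T, -, rfl⟩ := hx'
        exact hxn (hxy ▸ Finset.mem_insert_self p T)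

lemma chain'_M {r : ℕ} (hr : 2 ≤ r) : ∀ {p : ℕ}, r ≤ p → ∀ (j : ℕ), (M r p j).IsChain R := by
  intro p hrp
  induction p, hrp using Nat.le_induction with
  | base =>
    intro j
    rw [M_def]
    split_ifs
    · simp
    · exact chain'_J1 r r
    · exact chain'_L r j
    · omega
  | succ p hp IH =>
    intro j
    rcases Nat.lt_or_ge j 2 with hj2 | hj2
    · rw [M_def]
      split_ifs
      · simp
      · exact chain'_J1 _ _
      · omega
      · omega
    · rw [M_def, if_neg (by omega), if_neg (by omega), if_neg (by omega)]
      simp only [Nat.add_sub_cancel]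
      rw [List.isChain_append]
      refine ⟨IH j, ?_, ?_⟩
      · rw [List.isChain_reverse]
        have : ((M r p (j-1)).map (insert p)).IsChain R := by
          refine chain'_map_mem _ (IH (j-1)) ?_
          intro a ha b hb hab
          have han : p ∉ a := fun h => by
            simpa using ((mem_M hr hp (by omega)).mp ha).1 h
          have hbn : p ∉ b := fun h => by
            simpa using ((mem_M hr hp (by omega)).mp hb).1 h
          exact R_insert han hbn hab
        exact this.imp (fun a b h => h.symm)
      · intro x hx y hy
        -- x is the last set of `M r p j`, y is the first set of the reversed second block
        have hxl := List.mem_of_mem_getLast? hx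
        have hxm := (mem_M hr hp (by omega)).mp hxl
        have hjp : j ≤ p := by
          have := Finset.card_le_card hxm.1
          rw [hxm.2.1, Finset.card_range] at this
          omega
        rw [List.head?_reverse, List.getLast?_map] at hy
        -- y = insert p T where T is the last set of `M r p (j-1)`
        have hTmem : ∀ T, (M r p (j-1)).getLast? = some T →
            T ⊆ Finset.range p ∧ T.card = j - 1 := by
          intro T hT
          have := (mem_M hr hp (by omega) (S := T)).mp (List.mem_of_mem_getLast? hT)
          exact ⟨this.1, this.2.1⟩
        rcases Nat.lt_or_ge j 3 with hj3 | hj3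
        · -- j = 2
          have hj' : j = 2 := by omega
          subst hj'
          rw [getLast?_M2 hr hp] at hx
          rw [getLast?_M1] at hy
          simp only [Option.map_some, Option.mem_def, Option.some_inj] at hx hy
          subst hx
          subst hy
          rw [lst1_eq_e2 hr hp]
          refine R_seam ?_ ?_ ?_
          · exact Finset.singleton_subset_iff.mpr (Finset.mem_insert_of_mem (by simp))
          · rw [Finset.card_insert_of_notMem (by
                simp only [Finset.mem_singleton]
                exact fun h => (e2_ne hr hp) h.symm), Finset.card_singleton]
          · simp only [Finset.mem_insert, Finset.mem_singleton]
            have := e2_le_one r p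
            push_neg
            constructor <;> omega
        · rcases Nat.lt_or_ge j 4 with hj4 | hj4
          · -- j = 3
            have hj' : j = 3 := by omega
            subst hj'
            rw [getLast?_M3 hr hp (by omega) (by omega)] at hx
            rw [show (3:ℕ) - 1 = 2 from rfl, getLast?_M2 hr hp] at hy
            simp only [Option.map_some, Option.mem_def, Option.some_inj] at hx hy
            subst hx
            subst hy
            refine R_seam ?_ ?_ ?_
            · refine Finset.insert_subset (Finset.mem_insert_self _ _) ?_
              refine Finset.singleton_subset_iff.mpr (Finset.mem_insert_of_mem ?_)
              simp only [Finset.mem_range]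
              have := e2_le_one r p
              omega
            · rw [Finset.card_insert_of_notMem (by simp only [Finset.mem_range]; omega),
                Finset.card_insert_of_notMem (by
                  simp only [Finset.mem_singleton]
                  exact fun h => (e2_ne hr hp) h.symm),
                Finset.card_singleton, Finset.card_range]
            · simp only [Finset.mem_insert, Finset.mem_range]
              push_neg
              refine ⟨by omega, by omega⟩
          · -- j ≥ 4
            rw [getLast?_M3 hr hp (by omega) (by omega)] at hx
            rw [getLast?_M3 hr hp (by omega) (by omega)] at hy
            simp only [Option.map_some, Option.mem_def, Option.some_inj] at hx hy
            subst hx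
            subst hy
            refine R_seam ?_ ?_ ?_
            · refine Finset.insert_subset (Finset.mem_insert_self _ _) ?_
              intro z hz
              simp only [Finset.mem_range] at hz
              exact Finset.mem_insert_of_mem (by simp only [Finset.mem_range]; omega)
            · rw [Finset.card_insert_of_notMem (by simp only [Finset.mem_range]; omega),
                Finset.card_insert_of_notMem (by simp only [Finset.mem_range]; omega),
                Finset.card_range, Finset.card_range]
              omega
            · simp only [Finset.mem_insert, Finset.mem_range]
              push_neg
              refine ⟨by omega, by omega⟩

lemma exists_walk {V : Type*} {G : SimpleGraph V} :
    ∀ (l : List V), l ≠ [] → l.IsChain G.Adj → ∃ (u v : V) (w : G.Walk u v), w.support = l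
  | [], h, _ => absurd rfl h
  | [a], _, _ => ⟨a, a, SimpleGraph.Walk.nil, by simp⟩
  | a :: b :: t, _, hc => by
    rw [List.isChain_cons_cons] at hc
    obtain ⟨u, v, w, hw⟩ := exists_walk (b :: t) (by simp) hc.2
    have h2 := w.support_eq_cons
    rw [hw] at h2
    injection h2 with hub _
    subst hub
    exact ⟨a, v, SimpleGraph.Walk.cons hc.1 w, by simp [SimpleGraph.Walk.support_cons, hw]⟩

end RJG


/-- **Lemma (Hamiltonian paths in restricted Johnson graphs).**
For `2 ≤ r ≤ p` and `1 ≤ j ≤ p-1`, the graph whose vertices are the `j`-element subsets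
of `{1,…,p}` containing at least one element smaller than `r`, with adjacency given by
having `j-1` common elements, contains a Hamiltonian path. -/
theorem restrictedJohnsonGraph_hamiltonian_path (p j r : ℕ)
    (hr1 : 2 ≤ r) (hr2 : r ≤ p) (hj1 : 1 ≤ j) (hj2 : j ≤ p - 1) :
    ∃ (u v : {S : Finset (Fin p) // S.card = j ∧ ∃ i ∈ S, (i : ℕ) + 1 < r})
      (walk : (restrictedJohnsonGraph p j r).Walk u v), walk.IsHamiltonian := by
  classical
  set l := RJG.M r p j with hl
  have hjp : j ≤ p := by omega
  have hmem : ∀ S, S ∈ l ↔ S ⊆ Finset.range p ∧ S.card = j ∧ ∃ i ∈ S, i + 1 < r :=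
    fun S => RJG.mem_M hr1 hr2 hj1
  have hchain := RJG.chain'_M hr1 hr2 j
  have hnodup := RJG.nodup_M hr1 hr2 j
  have hne : l ≠ [] := RJG.M_ne_nil hr1 hr2 hj1 hjp
  -- the transfer map from finsets of naturals to finsets of `Fin p`
  let g : Finset ℕ → Finset (Fin p) := fun S =>
    (Finset.range p ∩ S).attachFin (fun m hm => Finset.mem_range.mp (Finset.mem_inter.mp hm).1)
  have hg_mem : ∀ (S : Finset ℕ), S ⊆ Finset.range p → ∀ x : Fin p,
      (x ∈ g S ↔ (x : ℕ) ∈ S) := by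
    intro S hS x
    rw [Finset.mem_attachFin, Finset.mem_inter]
    simp [Finset.mem_range, x.2]
  have hg_card : ∀ S : Finset ℕ, S ⊆ Finset.range p → (g S).card = S.card := by
    intro S hS
    rw [Finset.card_attachFin, Finset.inter_eq_right.mpr hS]
  have hg_inj : ∀ S T : Finset ℕ, S ⊆ Finset.range p → T ⊆ Finset.range p →
      g S = g T → S = T := by
    intro S T hS hT h
    ext m
    constructor
    · intro hm
      have hmp : m < p := Finset.mem_range.mp (hS hm)
      have := (hg_mem S hS ⟨m, hmp⟩).mpr hm
      rw [h] at this
      exact (hg_mem T hT ⟨m, hmp⟩).mp this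
    · intro hm
      have hmp : m < p := Finset.mem_range.mp (hT hm)
      have := (hg_mem T hT ⟨m, hmp⟩).mpr hm
      rw [← h] at this
      exact (hg_mem S hS ⟨m, hmp⟩).mp this
  have hg_inter : ∀ S T : Finset ℕ, g S ∩ g T = g (S ∩ T) := by
    intro S T
    ext x
    simp only [Finset.mem_inter, Finset.mem_attachFin, g]
    tauto
  -- the vertex list
  let F : {S // S ∈ l} → {S : Finset (Fin p) // S.card = j ∧ ∃ i ∈ S, (i : ℕ) + 1 < r} :=
    fun s => ⟨g s.1, by
      obtain ⟨h1, h2, h3⟩ := (hmem s.1).mp s.2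
      refine ⟨by rw [hg_card s.1 h1, h2], ?_⟩
      obtain ⟨i, hi, hir⟩ := h3
      have hip : i < p := Finset.mem_range.mp (h1 hi)
      exact ⟨⟨i, hip⟩, (hg_mem s.1 h1 ⟨i, hip⟩).mpr hi, hir⟩⟩
  let lV := l.attach.map F
  have hlV_ne : lV ≠ [] := by
    simp only [lV, ne_eq, List.map_eq_nil_iff, List.attach_eq_nil_iff]
    exact hne
  have hsub : ∀ s : {S // S ∈ l}, s.1 ⊆ Finset.range p := fun s => ((hmem s.1).mp s.2).1
  have hcard : ∀ s : {S // S ∈ l}, s.1.card = j := fun s => ((hmem s.1).mp s.2).2.1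
  have hFinj : ∀ a b : {S // S ∈ l}, F a = F b → a = b := by
    intro a b hab
    have : g a.1 = g b.1 := congrArg Subtype.val hab
    exact Subtype.ext (hg_inj a.1 b.1 (hsub a) (hsub b) this)
  have c1 : l.attach.IsChain (fun a b => RJG.R a.1 b.1) := by
    have h : List.IsChain RJG.R l := hchain
    rw [← List.attach_map_subtype_val l] at h
    exact (List.isChain_map _).mp h
  have c2 : lV.IsChain (restrictedJohnsonGraph p j r).Adj := by
    refine (List.isChain_map F).mpr (c1.imp ?_)
    intro a b hab
    constructor
    · intro h
      exact hab.ne (congrArg Subtype.val (hFinj a b h))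
    · show ((F a).1 ∩ (F b).1).card = j - 1
      show (g a.1 ∩ g b.1).card = j - 1
      rw [hg_inter, hg_card _ (fun x hx => hsub a (Finset.mem_inter.mp hx).1)]
      have h1 := Finset.card_inter_add_card_sdiff a.1 b.1
      rw [hab.1, hcard a] at h1
      omega
  have hnodupV : lV.Nodup := by
    refine List.Nodup.map_on ?_ (List.nodup_attach.mpr hnodup)
    intro a ha b hb hab
    exact hFinj a b hab
  have hcover : ∀ v : {S : Finset (Fin p) // S.card = j ∧ ∃ i ∈ S, (i : ℕ) + 1 < r},
      v ∈ lV := by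
    intro v
    set S := v.1.image Fin.val with hSdef
    have hS1 : S ⊆ Finset.range p := by
      intro x hx
      obtain ⟨y, -, rfl⟩ := Finset.mem_image.mp hx
      exact Finset.mem_range.mpr y.2
    have hS2 : S.card = j := by
      rw [hSdef, Finset.card_image_of_injective _ Fin.val_injective, v.2.1]
    have hS3 : ∃ i ∈ S, i + 1 < r := by
      obtain ⟨i, hi, hir⟩ := v.2.2
      exact ⟨(i : ℕ), Finset.mem_image_of_mem _ hi, hir⟩
    have hSl : S ∈ l := (hmem S).mpr ⟨hS1, hS2, hS3⟩
    have hFv : F ⟨S, hSl⟩ = v := by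
      refine Subtype.ext ?_
      show g S = v.1
      ext x
      rw [hg_mem S hS1 x]
      constructor
      · intro hx
        obtain ⟨y, hy, hxy⟩ := Finset.mem_image.mp hx
        exact Fin.val_injective hxy ▸ hy
      · intro hx
        exact Finset.mem_image_of_mem _ hx
    exact List.mem_map.mpr ⟨⟨S, hSl⟩, List.mem_attach _ _, hFv⟩
  obtain ⟨u, v, w, hw⟩ := RJG.exists_walk lV hlV_ne c2
  refine ⟨u, v, w, ?_⟩
  intro x
  rw [hw]
  convert List.count_eq_one_of_mem hnodupV (hcover x)
end
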